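/- arXiv:0912.2619 — 4 statements merged into one kernel-verified Lean document; each statement's English description precedes it below -/
import Mathlib

section
/- Assume W is finite. Let M be the submonoid of self-maps of W (under composition) generated by {f_i : i ∈ B}. Then the evaluation map m ↦ m(e), where e is the identity element of W, is a bijection from M onto W; in particular M has exactly |W| elements. -/
open scoped Classical

noncomputable section

namespace HGA

variable {B : Type*} {W : Type*} [Group W] {M : CoxeterMatrix B}

/-- `f_i : W → W` sends `w` to `w * s_i` if `i` is not a right descent of `w`,
and to `w` otherwise; regarded as an element of the monoid `Function.End W`
of self-maps of `W` under composition. -/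
def coxF (cs : CoxeterSystem M W) (i : B) : Function.End W :=
  fun w => if cs.IsRightDescent w i then w else w * cs.simple i

/-- The submonoid of self-maps of `W` (under composition) generated by the `f_i`. -/
def zeroHeckeMonoid (cs : CoxeterSystem M W) : Submonoid (Function.End W) :=
  Submonoid.closure (Set.range (coxF cs))

/-! ### Auxiliary material -/

/-- The left analogue of `coxF`. -/
def coxG (cs : CoxeterSystem M W) (i : B) : Function.End W :=
  fun w => if cs.IsLeftDescent w i then w else cs.simple i * w

/-- The generator of the sign representation on `W × ℤˣ`. -/
def sgnRep (cs : CoxeterSystem M W) (i : B) : Function.End (W × ℤˣ) :=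
  fun p => (cs.simple i * p.1 * cs.simple i,
    (if p.1 = cs.simple i then (-1 : ℤˣ) else 1) * p.2)

private lemma simple_pow_comm (cs : CoxeterSystem M W) (i j : B) (k : ℕ) :
    cs.simple j * (cs.simple i * cs.simple j) ^ k
      = (cs.simple j * cs.simple i) ^ k * cs.simple j := by
  induction k with
  | zero => simp
  | succ k ih =>
    simp only [pow_succ', mul_assoc]
    rw [ih]

private lemma sgnRep_pow (cs : CoxeterSystem M W) (i j : B) (k : ℕ) (p : W × ℤˣ) :
    ((sgnRep cs i * sgnRep cs j) ^ k) p =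
      ((cs.simple i * cs.simple j) ^ k * p.1 * (cs.simple j * cs.simple i) ^ k,
       (∏ n ∈ Finset.range (2 * k),
          (if p.1 = (cs.simple j * cs.simple i) ^ n * cs.simple j then (-1 : ℤˣ) else 1))
         * p.2) := by
  induction k with
  | zero => simp; rfl
  | succ k ih =>
    have happ : ((sgnRep cs i * sgnRep cs j) ^ (k+1)) p
        = (sgnRep cs i) ((sgnRep cs j) (((sgnRep cs i * sgnRep cs j) ^ k) p)) := by
      rw [pow_succ']; rfl
    rw [happ, ih]
    set si := cs.simple i with hsi
    set sj := cs.simple j with hsj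
    set A := (si * sj) ^ k * p.1 * (sj * si) ^ k with hA
    set C := (∏ n ∈ Finset.range (2 * k),
          (if p.1 = (sj * si) ^ n * sj then (-1 : ℤˣ) else 1)) with hC
    have hz : ∀ m : ℕ, (sj * si) ^ m * sj * (si * sj) ^ k = (sj * si) ^ (m + k) * sj := by
      intro m
      rw [pow_add, mul_assoc, mul_assoc, simple_pow_comm cs i j k, ← mul_assoc]
    have hss : sj * sj = 1 := by rw [hsj]; exact cs.simple_mul_simple_self j
    have h1 : (sj * si) ^ k = ((si * sj) ^ k)⁻¹ := by
      rw [hsi, hsj, ← inv_pow, mul_inv_rev, cs.inv_simple, cs.inv_simple]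
    have h2 : (si * sj) ^ k = ((sj * si) ^ k)⁻¹ := by
      rw [hsi, hsj, ← inv_pow, mul_inv_rev, cs.inv_simple, cs.inv_simple]
    have hconj : ∀ y : W, (A = y) ↔ p.1 = (sj * si) ^ k * y * (si * sj) ^ k := by
      intro y
      rw [hA, h1, h2]
      constructor
      · intro h; rw [← h]; group
      · intro h; rw [h]; group
    have hc1 : (A = sj) ↔ p.1 = (sj * si) ^ (2 * k) * sj := by
      rw [hconj sj, hz k, two_mul]
    have hc2 : (sj * A * sj = si) ↔ p.1 = (sj * si) ^ (2 * k + 1) * sj := by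
      have e1 : (sj * A * sj = si) ↔ (A = sj * si * sj) := by
        constructor
        · intro h; rw [← h]
          rw [show sj * (sj * A * sj) * sj = (sj * sj) * (A * (sj * sj)) from by group, hss,
            one_mul, mul_one]
        · intro h; rw [h]
          rw [show sj * (sj * si * sj) * sj = (sj * sj) * (si * (sj * sj)) from by group, hss,
            one_mul, mul_one]
      rw [e1, hconj (sj * si * sj)]
      have e2 : (sj * si) ^ k * (sj * si * sj) * (si * sj) ^ k
          = (sj * si) ^ (2 * k + 1) * sj := by
        calc (sj * si) ^ k * (sj * si * sj) * (si * sj) ^ k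
            = ((sj * si) ^ k * (sj * si)) * (sj * (si * sj) ^ k) := by group
          _ = ((sj * si) ^ k * (sj * si)) * ((sj * si) ^ k * sj) := by
              rw [simple_pow_comm cs i j k]
          _ = (sj * si) ^ (2 * k + 1) * sj := by
              rw [← pow_succ, ← mul_assoc, ← pow_add,
                show k + 1 + k = 2 * k + 1 by ring]
      rw [e2]
    show (si * (sj * A * sj) * si,
        (if sj * A * sj = si then (-1 : ℤˣ) else 1) * ((if A = sj then (-1 : ℤˣ) else 1)
          * (C * p.2))) = _
    have hprod : (∏ n ∈ Finset.range (2 * (k + 1)),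
          (if p.1 = (sj * si) ^ n * sj then (-1 : ℤˣ) else 1))
        = C * ((if p.1 = (sj * si) ^ (2 * k) * sj then (-1 : ℤˣ) else 1)
            * (if p.1 = (sj * si) ^ (2 * k + 1) * sj then (-1 : ℤˣ) else 1)) := by
      rw [show 2 * (k + 1) = (2 * k + 1) + 1 by ring, Finset.prod_range_succ,
        Finset.prod_range_succ, hC, mul_assoc]
    refine Prod.ext ?_ ?_
    · show si * (sj * A * sj) * si = (si * sj) ^ (k + 1) * p.1 * (sj * si) ^ (k + 1)
      rw [hA, pow_succ' (si * sj), pow_succ (sj * si)]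
      group
    · show (if sj * A * sj = si then (-1 : ℤˣ) else 1) * ((if A = sj then (-1 : ℤˣ) else 1)
          * (C * p.2)) = _
      rw [hprod, if_congr hc1 rfl rfl, if_congr hc2 rfl rfl]
      ac_rfl

private lemma sgnRep_liftable (cs : CoxeterSystem M W) :
    CoxeterMatrix.IsLiftable M (sgnRep cs) := by
  intro i j
  funext p
  have : ((sgnRep cs i * sgnRep cs j) ^ M i j) p = p := by
    rw [sgnRep_pow, cs.simple_mul_simple_pow i j, cs.simple_mul_simple_pow' i j]
    have hsgn : (∏ n ∈ Finset.range (2 * M i j),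
        (if p.1 = (cs.simple j * cs.simple i) ^ n * cs.simple j then (-1 : ℤˣ) else 1)) = 1 := by
      rw [two_mul, Finset.prod_range_add]
      have : ∀ n ∈ Finset.range (M i j),
          (if p.1 = (cs.simple j * cs.simple i) ^ (M i j + n) * cs.simple j
            then (-1 : ℤˣ) else 1)
          = (if p.1 = (cs.simple j * cs.simple i) ^ n * cs.simple j then (-1 : ℤˣ) else 1) := by
        intro n _
        rw [pow_add, cs.simple_mul_simple_pow' i j, one_mul]
      rw [Finset.prod_congr rfl this, Int.units_mul_self]
    rw [hsgn, one_mul, one_mul, mul_one]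
  exact this

/-- The sign representation, as a monoid hom out of `W`. -/
def sgnHom (cs : CoxeterSystem M W) : W →* Function.End (W × ℤˣ) :=
  cs.lift ⟨sgnRep cs, sgnRep_liftable cs⟩

private lemma sgnHom_simple (cs : CoxeterSystem M W) (i : B) :
    sgnHom cs (cs.simple i) = sgnRep cs i :=
  cs.lift_apply_simple (sgnRep_liftable cs) i

private lemma sgnHom_wordProd (cs : CoxeterSystem M W) (ω : List B) (p : W × ℤˣ) :
    sgnHom cs (cs.wordProd ω)⁻¹ p =
      ((cs.wordProd ω)⁻¹ * p.1 * cs.wordProd ω,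
       ((cs.leftInvSeq ω).map (fun t => if p.1 = t then (-1 : ℤˣ) else 1)).prod * p.2) := by
  induction ω generalizing p with
  | nil =>
    simp only [CoxeterSystem.wordProd_nil, inv_one, map_one, CoxeterSystem.leftInvSeq_nil,
      List.map_nil, List.prod_nil, one_mul, mul_one]
    rfl
  | cons i ω ih =>
    rw [cs.wordProd_cons, mul_inv_rev, cs.inv_simple, map_mul]
    have happ : (sgnHom cs (cs.wordProd ω)⁻¹ * sgnHom cs (cs.simple i)) p
        = sgnHom cs (cs.wordProd ω)⁻¹ (sgnHom cs (cs.simple i) p) := rfl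
    rw [happ, sgnHom_simple, sgnRep]
    rw [ih]
    have hlis : cs.leftInvSeq (i :: ω)
        = cs.simple i :: List.map (⇑(MulAut.conj (cs.simple i))) (cs.leftInvSeq ω) := rfl
    refine Prod.ext ?_ ?_
    · show (cs.wordProd ω)⁻¹ * (cs.simple i * p.1 * cs.simple i) * cs.wordProd ω
        = ((cs.wordProd ω)⁻¹ * cs.simple i) * p.1 * (cs.simple i * cs.wordProd ω)
      group
    · show ((cs.leftInvSeq ω).map
          (fun t => if cs.simple i * p.1 * cs.simple i = t then (-1 : ℤˣ) else 1)).prod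
          * ((if p.1 = cs.simple i then (-1 : ℤˣ) else 1) * p.2)
        = ((cs.leftInvSeq (i :: ω)).map (fun t => if p.1 = t then (-1 : ℤˣ) else 1)).prod * p.2
      rw [hlis, List.map_cons, List.prod_cons, List.map_map]
      have hfun : ((fun t => if p.1 = t then (-1 : ℤˣ) else 1) ∘ ⇑(MulAut.conj (cs.simple i)))
          = fun t => if cs.simple i * p.1 * cs.simple i = t then (-1 : ℤˣ) else 1 := by
        funext t
        simp only [Function.comp_apply, MulAut.conj_apply, cs.inv_simple]
        refine if_congr ?_ rfl rfl
        constructor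
        · intro h; rw [h]
          simp [mul_assoc, cs.simple_mul_simple_self, cs.simple_mul_simple_cancel_left]
        · intro h; rw [← h]
          simp [mul_assoc, cs.simple_mul_simple_self, cs.simple_mul_simple_cancel_left]
      rw [hfun]
      ac_rfl

/-- All terms in the product are `1` when `i` is not a left descent. -/
private lemma lis_prod_eq_one (cs : CoxeterSystem M W) {ω : List B} (hω : cs.IsReduced ω)
    {i : B} (h : ¬ cs.IsLeftDescent (cs.wordProd ω) i) :
    ((cs.leftInvSeq ω).map (fun t => if cs.simple i = t then (-1 : ℤˣ) else 1)).prod = 1 := by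
  apply List.prod_eq_one
  intro x hx
  obtain ⟨t, ht, rfl⟩ := List.mem_map.mp hx
  have : cs.simple i ≠ t := by
    rintro rfl
    exact h (cs.isLeftInversion_of_mem_leftInvSeq hω ht).2
  simp [this]

private lemma sgn_descent (cs : CoxeterSystem M W) {u : W} {i : B}
    (h : cs.IsLeftDescent u i) :
    (sgnHom cs u⁻¹ (cs.simple i, 1)).2 = -1 := by
  set u' := cs.simple i * u with hu'
  have hu : u = cs.simple i * u' := by rw [hu', ← mul_assoc, cs.simple_mul_simple_self, one_mul]
  have hnd : ¬ cs.IsLeftDescent u' i := by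
    intro hc
    unfold CoxeterSystem.IsLeftDescent at h hc
    rw [hu', cs.simple_mul_simple_cancel_left] at hc
    omega
  obtain ⟨ω, hωred, hωeq⟩ := cs.exists_reduced_word' u'
  have huinv : u⁻¹ = u'⁻¹ * cs.simple i := by
    rw [hu, mul_inv_rev, cs.inv_simple]
  rw [huinv, map_mul]
  have happ : (sgnHom cs u'⁻¹ * sgnHom cs (cs.simple i)) (cs.simple i, (1 : ℤˣ))
      = sgnHom cs u'⁻¹ (sgnHom cs (cs.simple i) (cs.simple i, (1 : ℤˣ))) := rfl
  have hstep : sgnRep cs i (cs.simple i, (1 : ℤˣ)) = (cs.simple i, (-1 : ℤˣ)) := by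
    simp [sgnRep, cs.simple_mul_simple_self]
  rw [happ, sgnHom_simple, hstep, hωeq, sgnHom_wordProd]
  show ((cs.leftInvSeq ω).map (fun t => if cs.simple i = t then (-1 : ℤˣ) else 1)).prod
      * (-1) = -1
  rw [lis_prod_eq_one cs hωred (by rwa [← hωeq]), one_mul]

/-- Exchange-type consequence: a left descent of `π ω` appears in the left
inversion sequence of a reduced word `ω`. -/
private lemma mem_lis_of_descent (cs : CoxeterSystem M W) {ω : List B} (hω : cs.IsReduced ω)
    {i : B} (h : cs.IsLeftDescent (cs.wordProd ω) i) :
    cs.simple i ∈ cs.leftInvSeq ω := by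
  by_contra hmem
  have h1 : ((cs.leftInvSeq ω).map
      (fun t => if cs.simple i = t then (-1 : ℤˣ) else 1)).prod = 1 := by
    apply List.prod_eq_one
    intro x hx
    obtain ⟨t, ht, rfl⟩ := List.mem_map.mp hx
    have : cs.simple i ≠ t := by rintro rfl; exact hmem ht
    simp [this]
  have h2 := sgn_descent cs h
  rw [sgnHom_wordProd] at h2
  simp only [h1, one_mul] at h2
  exact absurd h2 (by decide)

/-- The key lemma: if `i` is a left ascent of `w`, `j` is a right ascent of `w`, and
`i` is a left descent of `w * sⱼ`, then `sᵢ * w = w * sⱼ`. -/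
private lemma key_lemma (cs : CoxeterSystem M W) {w : W} {i j : B}
    (hi : ¬ cs.IsLeftDescent w i) (hj : ¬ cs.IsRightDescent w j)
    (hd : cs.IsLeftDescent (w * cs.simple j) i) :
    cs.simple i * w = w * cs.simple j := by
  obtain ⟨ω, hωred, hωeq⟩ := cs.exists_reduced_word' w
  have hlen : cs.length (w * cs.simple j) = cs.length w + 1 := cs.not_isRightDescent_iff.mp hj
  have hωred' : cs.IsReduced (ω.concat j) := by
    show cs.length (cs.wordProd (ω.concat j)) = (ω.concat j).length
    rw [cs.wordProd_concat, ← hωeq, hlen, List.length_concat, hωeq, hωred]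
  have hd' : cs.IsLeftDescent (cs.wordProd (ω.concat j)) i := by
    rwa [cs.wordProd_concat, ← hωeq]
  have hmem := mem_lis_of_descent cs hωred' hd'
  rw [cs.leftInvSeq_concat, List.concat_eq_append, List.mem_append] at hmem
  rcases hmem with hmem | hmem
  · exfalso
    exact hi (hωeq ▸ (cs.isLeftInversion_of_mem_leftInvSeq hωred hmem).2)
  · have : cs.simple i = cs.wordProd ω * cs.simple j * (cs.wordProd ω)⁻¹ := by
      simpa using hmem
    rw [← hωeq] at this
    rw [this]
    group

/-- The commutation of the left and right 0-Hecke operators. -/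
private lemma coxG_coxF_comm (cs : CoxeterSystem M W) (i j : B) :
    coxG cs i * coxF cs j = coxF cs j * coxG cs i := by
  funext w
  show coxG cs i (coxF cs j w) = coxF cs j (coxG cs i w)
  by_cases hL : cs.IsLeftDescent w i <;> by_cases hR : cs.IsRightDescent w j
  · simp [coxF, coxG, hL, hR]
  · -- i left descent, j right ascent
    have h1 : cs.length (cs.simple i * w) + 1 = cs.length w := cs.isLeftDescent_iff.mp hL
    have h2 : cs.length (w * cs.simple j) = cs.length w + 1 := cs.not_isRightDescent_iff.mp hR
    have h3 : cs.IsLeftDescent (w * cs.simple j) i := by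
      unfold CoxeterSystem.IsLeftDescent
      calc cs.length (cs.simple i * (w * cs.simple j))
          ≤ cs.length (cs.simple i * w) + cs.length (cs.simple j) := by
            rw [← mul_assoc]; exact cs.length_mul_le _ _
        _ = cs.length (cs.simple i * w) + 1 := by rw [cs.length_simple]
        _ = cs.length w := h1
        _ < cs.length (w * cs.simple j) := by omega
    simp [coxF, coxG, hL, hR, h3]
  · -- i left ascent, j right descent
    have h1 : cs.length (cs.simple i * w) = cs.length w + 1 := cs.not_isLeftDescent_iff.mp hL
    have h2 : cs.length (w * cs.simple j) + 1 = cs.length w := cs.isRightDescent_iff.mp hR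
    have h3 : cs.IsRightDescent (cs.simple i * w) j := by
      unfold CoxeterSystem.IsRightDescent
      calc cs.length (cs.simple i * w * cs.simple j)
          ≤ cs.length (cs.simple i) + cs.length (w * cs.simple j) := by
            rw [mul_assoc]; exact cs.length_mul_le _ _
        _ = cs.length (w * cs.simple j) + 1 := by rw [cs.length_simple]; omega
        _ = cs.length w := h2
        _ < cs.length (cs.simple i * w) := by omega
    simp [coxF, coxG, hL, hR, h3]
  · -- both ascents
    have h1 : cs.length (cs.simple i * w) = cs.length w + 1 := cs.not_isLeftDescent_iff.mp hL
    have h2 : cs.length (w * cs.simple j) = cs.length w + 1 := cs.not_isRightDescent_iff.mp hR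
    by_cases hd : cs.IsLeftDescent (w * cs.simple j) i
    · have hkey := key_lemma cs hL hR hd
      have h4 : cs.IsRightDescent (cs.simple i * w) j := by
        show cs.length (cs.simple i * w * cs.simple j) < cs.length (cs.simple i * w)
        rw [hkey, cs.simple_mul_simple_cancel_right]
        omega
      simp only [coxF, coxG, if_neg hL, if_neg hR, if_pos hd, if_pos h4]
      exact hkey.symm
    · have h3 : cs.length (cs.simple i * (w * cs.simple j)) = cs.length w + 2 := by
        have := cs.not_isLeftDescent_iff.mp hd
        omega
      have h4 : ¬ cs.IsRightDescent (cs.simple i * w) j := by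
        unfold CoxeterSystem.IsRightDescent
        rw [mul_assoc]
        omega
      simp only [coxF, coxG, if_neg hL, if_neg hR, if_neg hd, if_neg h4]
      rw [mul_assoc]

private lemma prodF_apply_one (cs : CoxeterSystem M W) {ω : List B} (hω : cs.IsReduced ω) :
    (ω.map (coxF cs)).prod 1 = cs.wordProd ω.reverse := by
  induction ω with
  | nil => rfl
  | cons i ω ih =>
    have hω' : cs.IsReduced ω := by
      have := CoxeterSystem.IsReduced.drop (j := 1) hω
      simpa using this
    rw [List.map_cons, List.prod_cons]
    have happ : (coxF cs i * (ω.map (coxF cs)).prod) 1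
        = coxF cs i ((ω.map (coxF cs)).prod 1) := rfl
    rw [happ, ih hω']
    have hrev : cs.IsReduced (i :: ω).reverse := (cs.isReduced_reverse_iff _).mpr hω
    have hrev' : cs.IsReduced ω.reverse := (cs.isReduced_reverse_iff _).mpr hω'
    have hnd : ¬ cs.IsRightDescent (cs.wordProd ω.reverse) i := by
      unfold CoxeterSystem.IsRightDescent
      have e1 : cs.wordProd ω.reverse * cs.simple i = cs.wordProd ((i :: ω).reverse) := by
        rw [List.reverse_cons, cs.wordProd_append, cs.wordProd_singleton]
      rw [e1, hrev, hrev']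
      simp
    rw [coxF, if_neg hnd]
    rw [List.reverse_cons, cs.wordProd_append, cs.wordProd_singleton]

private lemma prodG_apply_one (cs : CoxeterSystem M W) {ω : List B} (hω : cs.IsReduced ω) :
    (ω.map (coxG cs)).prod 1 = cs.wordProd ω := by
  induction ω with
  | nil => rfl
  | cons i ω ih =>
    have hω' : cs.IsReduced ω := by
      have := CoxeterSystem.IsReduced.drop (j := 1) hω
      simpa using this
    rw [List.map_cons, List.prod_cons]
    have happ : (coxG cs i * (ω.map (coxG cs)).prod) 1
        = coxG cs i ((ω.map (coxG cs)).prod 1) := rfl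
    rw [happ, ih hω']
    have hnd : ¬ cs.IsLeftDescent (cs.wordProd ω) i := by
      unfold CoxeterSystem.IsLeftDescent
      have e1 : cs.simple i * cs.wordProd ω = cs.wordProd (i :: ω) := (cs.wordProd_cons i ω).symm
      rw [e1, hω, hω']
      simp
    rw [coxG, if_neg hnd, cs.wordProd_cons]

/-- for `W` finite, evaluation at the identity of `W` is a bijection
from the monoid generated by the `f_i` onto `W`; in particular this monoid has
exactly `|W|` elements. -/
theorem zeroHeckeMonoid_eval_bijective (cs : CoxeterSystem M W) [Finite W] :
    Function.Bijective
      (fun m : zeroHeckeMonoid cs => (m : Function.End W) (1 : W)) ∧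
    Nat.card (zeroHeckeMonoid cs) = Nat.card W := by
  have hcomm : ∀ m ∈ zeroHeckeMonoid cs, ∀ g ∈ Submonoid.closure (Set.range (coxG cs)),
      m * g = g * m := by
    intro m hm
    have hcent : m ∈ Submonoid.centralizer (Set.range (coxG cs)) := by
      refine Submonoid.closure_le.mpr ?_ hm
      rintro _ ⟨j, rfl⟩
      show coxF cs j ∈ Submonoid.centralizer (Set.range (coxG cs))
      refine Submonoid.mem_centralizer_iff.mpr ?_
      rintro _ ⟨i, rfl⟩
      exact coxG_coxF_comm cs i j
    intro g hg
    induction hg using Submonoid.closure_induction with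
    | mem x hx => exact (hcent x hx).symm
    | one => simp
    | mul x y _ _ hx hy => rw [← mul_assoc, hx, mul_assoc, hy, mul_assoc]
  have hsurj : Function.Surjective
      (fun m : zeroHeckeMonoid cs => (m : Function.End W) (1 : W)) := by
    intro w
    obtain ⟨ω, hωred, hωeq⟩ := cs.exists_reduced_word' w⁻¹
    have hmem : (ω.map (coxF cs)).prod ∈ zeroHeckeMonoid cs := by
      apply Submonoid.list_prod_mem
      intro f hf
      obtain ⟨i, _, rfl⟩ := List.mem_map.mp hf
      exact Submonoid.subset_closure ⟨i, rfl⟩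
    refine ⟨⟨(ω.map (coxF cs)).prod, hmem⟩, ?_⟩
    show (ω.map (coxF cs)).prod 1 = w
    rw [prodF_apply_one cs hωred, cs.wordProd_reverse, ← hωeq, inv_inv]
  have hinj : Function.Injective
      (fun m : zeroHeckeMonoid cs => (m : Function.End W) (1 : W)) := by
    rintro ⟨m, hm⟩ ⟨m', hm'⟩ h
    simp only at h
    apply Subtype.ext
    funext u
    obtain ⟨ω, hωred, hωeq⟩ := cs.exists_reduced_word' u
    set g := (ω.map (coxG cs)).prod with hg
    have hgmem : g ∈ Submonoid.closure (Set.range (coxG cs)) := by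
      apply Submonoid.list_prod_mem
      intro f hf
      obtain ⟨i, _, rfl⟩ := List.mem_map.mp hf
      exact Submonoid.subset_closure ⟨i, rfl⟩
    have hgu : g 1 = u := by rw [hg, prodG_apply_one cs hωred, ← hωeq]
    calc m u = m (g 1) := by rw [hgu]
      _ = (m * g) 1 := rfl
      _ = (g * m) 1 := by rw [hcomm m hm g hgmem]
      _ = g (m 1) := rfl
      _ = g (m' 1) := by rw [h]
      _ = (g * m') 1 := rfl
      _ = (m' * g) 1 := by rw [hcomm m' hm' g hgmem]
      _ = m' (g 1) := rfl
      _ = m' u := by rw [hgu]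
  exact ⟨⟨hinj, hsurj⟩, Nat.card_eq_of_bijective _ ⟨hinj, hsurj⟩⟩

end HGA
end
end

section
/- For all scalars q₁, q₂ ∈ ℂ and every i ∈ B, the operator T_i := (q₁ + q₂)·π_i − q₁·σ_i in End_ℂ(ℂ[W]) satisfies the quadratic Hecke relation (T_i − q₁·id) ∘ (T_i − q₂·id) = 0. -/
open scoped Classical

noncomputable section

namespace HGA

variable {B : Type*} {W : Type*} [Group W] {M : CoxeterMatrix B}

/-- `σ_i` : the linear extension to `ℂ[W]` of right multiplication by the simple
reflection `s_i`. -/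
def sigmaOp (cs : CoxeterSystem M W) (i : B) : Module.End ℂ (MonoidAlgebra ℂ W) :=
  (Finsupp.lift (MonoidAlgebra ℂ W) ℂ W fun w =>
    MonoidAlgebra.single (w * cs.simple i) (1 : ℂ))
  ∘ₗ (MonoidAlgebra.coeffLinearEquiv ℂ).toLinearMap

/-- `π_i` : the antisorting (0-Hecke) operator: on a basis element `w` it gives `w * s_i`
if `i` is not a right descent of `w`, and `w` otherwise. -/
def piOp (cs : CoxeterSystem M W) (i : B) : Module.End ℂ (MonoidAlgebra ℂ W) :=
  (Finsupp.lift (MonoidAlgebra ℂ W) ℂ W fun w =>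
    if cs.IsRightDescent w i then MonoidAlgebra.single w (1 : ℂ)
    else MonoidAlgebra.single (w * cs.simple i) (1 : ℂ))
  ∘ₗ (MonoidAlgebra.coeffLinearEquiv ℂ).toLinearMap

/-- `π̄_i` : the sorting operator: on a basis element `w` it gives `w * s_i`
if `i` is a right descent of `w`, and `w` otherwise. -/
def piBarOp (cs : CoxeterSystem M W) (i : B) : Module.End ℂ (MonoidAlgebra ℂ W) :=
  (Finsupp.lift (MonoidAlgebra ℂ W) ℂ W fun w =>
    if cs.IsRightDescent w i then MonoidAlgebra.single (w * cs.simple i) (1 : ℂ)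
    else MonoidAlgebra.single w (1 : ℂ))
  ∘ₗ (MonoidAlgebra.coeffLinearEquiv ℂ).toLinearMap

lemma sigma_single (cs : CoxeterSystem M W) (i : B) (w : W) (c : ℂ) :
    sigmaOp cs i (MonoidAlgebra.single w c) = MonoidAlgebra.single (w * cs.simple i) c := by
  rw [sigmaOp, LinearMap.comp_apply]
  erw [show ((MonoidAlgebra.coeffLinearEquiv ℂ : MonoidAlgebra ℂ W ≃ₗ[ℂ] W →₀ ℂ) :
      MonoidAlgebra ℂ W →ₗ[ℂ] W →₀ ℂ) (MonoidAlgebra.single w c) = Finsupp.single w c from rfl]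
  erw [Finsupp.lift_apply, Finsupp.sum_single_index (by simp),
    MonoidAlgebra.smul_single', mul_one]

lemma pi_single (cs : CoxeterSystem M W) (i : B) (w : W) (c : ℂ) :
    piOp cs i (MonoidAlgebra.single w c) =
      if cs.IsRightDescent w i then MonoidAlgebra.single w c
      else MonoidAlgebra.single (w * cs.simple i) c := by
  rw [piOp, LinearMap.comp_apply]
  erw [show ((MonoidAlgebra.coeffLinearEquiv ℂ : MonoidAlgebra ℂ W ≃ₗ[ℂ] W →₀ ℂ) :
      MonoidAlgebra ℂ W →ₗ[ℂ] W →₀ ℂ) (MonoidAlgebra.single w c) = Finsupp.single w c from rfl]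
  erw [Finsupp.lift_apply, Finsupp.sum_single_index (by simp)]
  by_cases h : cs.IsRightDescent w i <;>
    simp [h, MonoidAlgebra.smul_single']

/-- for all `q₁ q₂ : ℂ` and `i`, the operator
`T_i = (q₁+q₂) • π_i − q₁ • σ_i` satisfies `(T_i − q₁) * (T_i − q₂) = 0`. -/
theorem hecke_quadratic_relation (cs : CoxeterSystem M W) (q₁ q₂ : ℂ) (i : B) :
    ((q₁ + q₂) • piOp cs i - q₁ • sigmaOp cs i - q₁ • (1 : Module.End ℂ (MonoidAlgebra ℂ W))) *
      ((q₁ + q₂) • piOp cs i - q₁ • sigmaOp cs i - q₂ • (1 : Module.End ℂ (MonoidAlgebra ℂ W)))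
      = 0 := by
  refine LinearMap.ext fun v => ?_
  induction v using MonoidAlgebra.induction_linear with
  | zero => simp
  | add f g hf hg => rw [map_add, hf, hg]; simp
  | single w c => ?_
  have hss : w * cs.simple i * cs.simple i = w := by
    rw [mul_assoc, cs.simple_mul_simple_self, mul_one]
  have hdesc : cs.IsRightDescent (w * cs.simple i) i ↔ ¬ cs.IsRightDescent w i := by
    simp only [cs.isRightDescent_iff_not_isRightDescent_mul (w := w), not_not]
  by_cases h : cs.IsRightDescent w i
  · simp only [Module.End.mul_apply, LinearMap.sub_apply, LinearMap.smul_apply,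
      Module.End.one_apply, LinearMap.zero_apply, map_sub, map_smul, pi_single,
      sigma_single, h, hss, hdesc, if_true, if_false, not_true, not_false_iff,
      smul_sub, smul_smul]
    module
  · simp only [Module.End.mul_apply, LinearMap.sub_apply, LinearMap.smul_apply,
      Module.End.one_apply, LinearMap.zero_apply, map_sub, map_smul, pi_single,
      sigma_single, h, hss, hdesc, if_true, if_false, not_true, not_false_iff,
      smul_sub, smul_smul]
    module

end HGA
end
end

section
/- Assume W is finite. For each w' ∈ W and each reduced word (i_1, …, i_k) for w' (i.e. w' = s_{i_1}⋯s_{i_k} with k = ℓ(w')), the composed operator π_{i_k} ∘ ⋯ ∘ π_{i_1} (applying π_{i_1} first) does not depend on the chosen reduced word; denote it π_{w'}. Then the family of operators x ↦ π_{w'}(x·w), indexed by the pairs (w, w') ∈ W × W with D_R(w) ∩ D_L(w') = ∅, is a basis of the ℂ-vector space H(W). -/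
open scoped Classical

noncomputable section

namespace HGA

variable {B : Type*} {W : Type*} [Group W] {M : CoxeterMatrix B}

/-- The Hecke group algebra `H(W)` : the unital ℂ-subalgebra of `End_ℂ(ℂ[W])`
generated by the `σ_i` and the `π_i`. -/
def heckeGroupAlgebra (cs : CoxeterSystem M W) :
    Subalgebra ℂ (Module.End ℂ (MonoidAlgebra ℂ W)) :=
  Algebra.adjoin ℂ (Set.range (sigmaOp cs) ∪ Set.range (piOp cs))

/-- The linear extension to `ℂ[W]` of right multiplication by `w`. -/
def rOp (w : W) : Module.End ℂ (MonoidAlgebra ℂ W) :=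
  (Finsupp.lift (MonoidAlgebra ℂ W) ℂ W fun u =>
    MonoidAlgebra.single (u * w) (1 : ℂ)) ∘ₗ
    (MonoidAlgebra.coeffLinearEquiv ℂ).toLinearMap

/-- For a word `l = [i₁, …, i_k]`, the composition `π_{i_k} ∘ ⋯ ∘ π_{i_1}`
(applying `π_{i_1}` first); recall that in `Module.End` the product `f * g`
applies `g` first. -/
def piWord (cs : CoxeterSystem M W) (l : List B) : Module.End ℂ (MonoidAlgebra ℂ W) :=
  (l.reverse.map (piOp cs)).prod

instance : CoeFun (MonoidAlgebra ℂ W) (fun _ => W → ℂ) := ⟨fun x => x.coeff⟩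

variable (cs : CoxeterSystem M W)

local prefix:100 "s" => cs.simple
local prefix:100 "π" => cs.wordProd
local prefix:100 "ℓ" => cs.length
local prefix:100 "ris" => cs.rightInvSeq

/-- flip permutation -/
def flipFun (i : B) : W × ℤˣ → W × ℤˣ :=
  fun p => (s i * p.1 * s i, if p.1 = s i then -p.2 else p.2)

lemma flipFun_involutive (i : B) : Function.Involutive (flipFun cs i) := by
  intro p
  simp only [flipFun]
  rcases p with ⟨t, e⟩
  by_cases h : t = s i
  · simp [h, cs.simple_mul_simple_cancel_left, cs.simple_mul_simple_self]
  · have h2 : s i * t * s i ≠ s i := by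
      intro hc
      apply h
      have := congrArg (fun z => s i * z * s i) hc
      simpa [mul_assoc, cs.simple_mul_simple_cancel_left, cs.simple_mul_simple_self,
        cs.simple_mul_simple_cancel_right] using this
    simp only [h, if_false, h2, Prod.mk.injEq]
    refine ⟨?_, trivial⟩
    simp [mul_assoc, cs.simple_mul_simple_cancel_left, cs.simple_mul_simple_cancel_right]

def flipPerm (i : B) : Equiv.Perm (W × ℤˣ) := (flipFun_involutive cs i).toPerm

@[simp] lemma flipPerm_apply (i : B) (p : W × ℤˣ) :
    flipPerm cs i p = (s i * p.1 * s i, if p.1 = s i then -p.2 else p.2) := rfl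

/-- product of flip perms along a word -/
def psiWord (ω : List B) : Equiv.Perm (W × ℤˣ) := (ω.map (flipPerm cs)).prod

@[simp] lemma psiWord_nil : psiWord cs [] = 1 := rfl

lemma psiWord_cons (i : B) (ω : List B) :
    psiWord cs (i :: ω) = flipPerm cs i * psiWord cs ω := by
  simp [psiWord]

lemma psiWord_apply (ω : List B) (t : W) (e : ℤˣ) :
    psiWord cs ω (t, e) = (π ω * t * (π ω)⁻¹,
      e * (-1 : ℤˣ) ^ ((ris ω).count t)) := by
  induction ω generalizing t e with
  | nil => simp
  | cons i ω ih =>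
    rw [psiWord_cons, Equiv.Perm.mul_apply, ih]
    rw [CoxeterSystem.rightInvSeq]
    simp only [flipPerm_apply, List.count_cons, beq_iff_eq, Prod.mk.injEq]
    have hconj : (π ω * t * (π ω)⁻¹ = s i) ↔ (t = (π ω)⁻¹ * s i * π ω) := by
      constructor
      · intro h; rw [← h]; group
      · intro h; rw [h]; group
    refine ⟨?_, ?_⟩
    · rw [cs.wordProd_cons]
      rw [mul_inv_rev, cs.inv_simple]
      group
    · by_cases h : (π ω)⁻¹ * s i * π ω = t
      · rw [if_pos (hconj.mpr h.symm), if_pos h]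
        rw [pow_succ, mul_neg_one, mul_neg]
      · rw [if_neg (fun hc => h (hconj.mp hc).symm), if_neg h]
        simp


-- drop of alternating word
lemma alt_drop (i j : B) : ∀ N d, d ≤ N →
    (CoxeterSystem.alternatingWord i j N).drop d = CoxeterSystem.alternatingWord i j (N - d) := by
  intro N
  induction N with
  | zero => intro d hd; interval_cases d; simp [CoxeterSystem.alternatingWord]
  | succ n ih =>
    intro d hd
    cases d with
    | zero => simp
    | succ d' =>
      rw [CoxeterSystem.alternatingWord_succ' i j n, List.drop_succ_cons, ih d' (by omega)]
      congr 1
      omega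

lemma alt_getElem (i j : B) (N k : ℕ) (h : k < N) :
    (CoxeterSystem.alternatingWord i j N)[k]? =
      some (if Even (N - k - 1) then j else i) := by
  have h1 : (CoxeterSystem.alternatingWord i j N).drop k
      = CoxeterSystem.alternatingWord i j (N - k) := alt_drop i j N k (by omega)
  have h2 : N - k = (N - k - 1) + 1 := by omega
  rw [h2, CoxeterSystem.alternatingWord_succ' i j (N - k - 1)] at h1
  have := congrArg (fun l => l[0]?) h1
  simp only [List.getElem?_drop, Nat.add_zero] at this
  simpa using this

-- key conjugation helper
lemma y_pow_conj (i j : B) (k : ℕ) :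
    s j * (s i * s j) ^ k = ((s i * s j) ^ k)⁻¹ * s j := by
  have base : s j * (s i * s j) = (s i * s j)⁻¹ * s j := by
    simp only [mul_inv_rev, cs.inv_simple, mul_assoc]
  induction k with
  | zero => simp
  | succ n ih =>
    rw [pow_succ, ← mul_assoc, ih, mul_assoc, base, ← mul_assoc, ← mul_inv_rev,
      ← pow_succ', ← pow_succ]

-- E_n formula : entries of ris of alternating word
lemma ris_alt_entry (i j : B) (n : ℕ) :
    (π (CoxeterSystem.alternatingWord i j n))⁻¹ * (if Even n then s j else s i)
      * π (CoxeterSystem.alternatingWord i j n)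
    = ((s i * s j) ^ n)⁻¹ * s j := by
  rcases Nat.even_or_odd n with he | ho
  · rw [if_pos he, cs.prod_alternatingWord_eq_mul_pow, if_pos he, one_mul]
    rw [mul_assoc, y_pow_conj cs i j (n / 2), ← mul_assoc, ← mul_inv_rev, ← pow_add]
    have hm : n % 2 = 0 := Nat.even_iff.mp he
    have : n / 2 + n / 2 = n := by omega
    rw [this]
  · have hne : ¬ Even n := by simp [Nat.even_iff, Nat.odd_iff.mp ho]
    rw [if_neg hne, cs.prod_alternatingWord_eq_mul_pow, if_neg hne]
    have hx : s j * s i * s j = (s i * s j)⁻¹ * s j := by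
      simp only [mul_inv_rev, cs.inv_simple]
    calc (s j * (s i * s j) ^ (n / 2))⁻¹ * s i * (s j * (s i * s j) ^ (n / 2))
        = ((s i * s j) ^ (n / 2))⁻¹ * ((s j * s i * s j) * (s i * s j) ^ (n / 2)) := by
          simp only [mul_inv_rev, cs.inv_simple]
          group
      _ = ((s i * s j) ^ (n / 2))⁻¹ * (((s i * s j)⁻¹ * (s j * (s i * s j) ^ (n / 2)))) := by
          rw [hx]; group
      _ = ((s i * s j) ^ (n / 2))⁻¹ * ((s i * s j)⁻¹ * (((s i * s j) ^ (n / 2))⁻¹ * s j)) := by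
          rw [y_pow_conj cs i j (n / 2)]
      _ = (((s i * s j) ^ (n / 2)) * (s i * s j) * ((s i * s j) ^ (n / 2)))⁻¹ * s j := by
          group
      _ = ((s i * s j) ^ n)⁻¹ * s j := by
          rw [← pow_succ, ← pow_add]
          have hm : n % 2 = 1 := Nat.odd_iff.mp ho
          have : n / 2 + 1 + n / 2 = n := by omega
          rw [this]

lemma ris_alt_getD (i j : B) (N k : ℕ) (h : k < N) :
    (ris (CoxeterSystem.alternatingWord i j N)).getD k 1
      = ((s i * s j) ^ (N - k - 1))⁻¹ * s j := by
  rw [cs.getD_rightInvSeq]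
  rw [alt_getElem i j N k h]
  have hd : (CoxeterSystem.alternatingWord i j N).drop (k+1)
      = CoxeterSystem.alternatingWord i j (N - (k+1)) := alt_drop i j N (k+1) (by omega)
  rw [hd]
  have hnk : N - (k + 1) = N - k - 1 := by omega
  rw [hnk]
  simp only [Option.map_some, Option.getD_some, apply_ite cs.simple]
  exact ris_alt_entry cs i j (N - k - 1)


lemma count_ris_alt_even (i j : B) (m : ℕ) (hm : (s i * s j) ^ m = 1) (t : W) :
    Even ((ris (CoxeterSystem.alternatingWord i j (2 * m))).count t) := by
  set l := ris (CoxeterSystem.alternatingWord i j (2 * m)) with hl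
  have hlen : l.length = 2 * m := by
    rw [hl, cs.length_rightInvSeq, CoxeterSystem.length_alternatingWord]
  have hdt : l.drop m = l.take m := by
    apply List.ext_getElem
    · simp [hlen]; omega
    · intro k h1 h2
      have hk : k < m := by simp [hlen] at h2; omega
      rw [List.getElem_drop, List.getElem_take]
      have e1 : l[m + k] = l.getD (m + k) 1 := by
        rw [List.getD_eq_getElem _ _ (by omega : m + k < l.length)]
      have e2 : l[k]'(by omega : k < l.length) = l.getD k 1 := by
        rw [List.getD_eq_getElem _ _ (by omega : k < l.length)]
      rw [e1, e2, hl, ris_alt_getD cs i j _ _ (by omega), ris_alt_getD cs i j _ _ (by omega)]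
      have h3 : 2 * m - k - 1 = (2 * m - (m + k) - 1) + m := by omega
      rw [h3, pow_add, hm, mul_one]
  have hsplit : l = l.take m ++ l.take m := by
    conv_lhs => rw [← List.take_append_drop m l, hdt]
  rw [hsplit, List.count_append]
  exact ⟨_, rfl⟩

lemma flip_liftable : M.IsLiftable (flipPerm cs) := by
  intro i j
  have halt : ∀ n : ℕ, (flipPerm cs i * flipPerm cs j) ^ n
      = psiWord cs (CoxeterSystem.alternatingWord i j (2 * n)) := by
    intro n
    induction n with
    | zero => simp [psiWord, CoxeterSystem.alternatingWord]
    | succ n ih =>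
      have h2 : CoxeterSystem.alternatingWord i j (2 * (n+1))
          = i :: j :: CoxeterSystem.alternatingWord i j (2 * n) := by
        have e1 : 2 * (n+1) = (2*n+1) + 1 := by omega
        rw [e1, CoxeterSystem.alternatingWord_succ' i j (2*n+1),
          CoxeterSystem.alternatingWord_succ' i j (2*n)]
        simp [Nat.even_add_one, parity_simps]
      rw [h2, psiWord_cons, psiWord_cons, ← ih, pow_succ']
      rw [mul_assoc]
  rw [halt (M i j)]
  apply Equiv.ext
  rintro ⟨t, e⟩
  rw [psiWord_apply]
  have hprod : π (CoxeterSystem.alternatingWord i j (2 * M i j)) = 1 := by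
    rw [cs.prod_alternatingWord_eq_mul_pow]
    rw [if_pos (by simp [Nat.even_mul])]
    rw [one_mul]
    have : 2 * M i j / 2 = M i j := by omega
    rw [this, cs.simple_mul_simple_pow]
  have hcount := count_ris_alt_even cs i j (M i j) (cs.simple_mul_simple_pow i j) t
  rw [hprod, Even.neg_one_pow hcount]
  simp

/-- the sign representation on reflections -/
def psi : W →* Equiv.Perm (W × ℤˣ) := cs.lift ⟨flipPerm cs, flip_liftable cs⟩

lemma psi_simple (i : B) : psi cs (s i) = flipPerm cs i := cs.lift_apply_simple _ i

lemma psi_wordProd (ω : List B) : psi cs (π ω) = psiWord cs ω := by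
  unfold CoxeterSystem.wordProd psiWord
  rw [MonoidHom.map_list_prod]
  rw [List.map_map]
  congr 1
  apply List.map_congr_left
  intro i _
  exact psi_simple cs i

/-- sign of w at t -/
def eta (w t : W) : ℤˣ := (psi cs w (t, 1)).2

lemma eta_eq_count (ω : List B) (t : W) :
    eta cs (π ω) t = (-1 : ℤˣ) ^ ((ris ω).count t) := by
  unfold eta
  rw [psi_wordProd, psiWord_apply]
  simp

lemma psi_apply (w t : W) (e : ℤˣ) :
    psi cs w (t, e) = (w * t * w⁻¹, e * eta cs w t) := by
  obtain ⟨ω, rfl⟩ := cs.wordProd_surjective w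
  rw [psi_wordProd, psiWord_apply, eta_eq_count]

lemma eta_mul (u v t : W) :
    eta cs (u * v) t = eta cs v t * eta cs u (v * t * v⁻¹) := by
  have h : psi cs (u * v) (t, 1) = psi cs u (psi cs v (t, 1)) := by
    rw [map_mul]; rfl
  unfold eta
  rw [h, psi_apply cs v t 1, one_mul, psi_apply cs u (v * t * v⁻¹) (eta cs v t)]
  rfl

lemma eta_simple (i : B) (t : W) :
    eta cs (s i) t = if t = s i then -1 else 1 := by
  unfold eta
  rw [psi_simple]
  simp only [flipPerm_apply]

lemma count_map_eq (l : List W) (f : W → W) (t a : W) (h : ∀ u, f u = t ↔ u = a) :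
    (l.map f).count t = l.count a := by
  induction l with
  | nil => simp
  | cons x xs ih =>
    simp only [List.map_cons, List.count_cons, ih, beq_iff_eq, h]

lemma ris_append (α β : List B) :
    ris (α ++ β) = (ris α).map (fun u => (π β)⁻¹ * u * (π β)) ++ ris β := by
  induction α with
  | nil => simp
  | cons i α ih =>
    rw [List.cons_append]
    show ((π (α ++ β))⁻¹ * s i * π (α ++ β)) :: ris (α ++ β) = _
    rw [ih, cs.wordProd_append]
    simp only [List.map_cons, List.cons_append, mul_inv_rev]
    congr 1
    group

lemma wordProd_split (ω : List B) (k : ℕ) (h : k < ω.length) :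
    π ω = π (ω.take k) * s (ω[k]) * π (ω.drop (k + 1)) := by
  have h1 : ω = ω.take k ++ ω[k] :: ω.drop (k+1) := by
    conv_lhs => rw [← List.take_append_drop k ω]
    rw [List.getElem_cons_drop]
  calc π ω = π (ω.take k ++ ω[k] :: ω.drop (k+1)) := by rw [← h1]
  _ = _ := by rw [cs.wordProd_append, cs.wordProd_cons, ← mul_assoc]

lemma lis_eq_map_conj (ω : List B) :
    cs.leftInvSeq ω = (ris ω).map (fun u => (π ω) * u * (π ω)⁻¹) := by
  apply List.ext_getElem
  · simp
  · intro k h1 h2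
    rw [List.getElem_map]
    have hk : k < ω.length := by simpa using h1
    have e1 : (cs.leftInvSeq ω)[k] = (cs.leftInvSeq ω).getD k 1 := by
      rw [List.getD_eq_getElem _ _ h1]
    have e2 : (ris ω)[k]'(by simpa using hk) = (ris ω).getD k 1 := by
      rw [List.getD_eq_getElem _ _ (by simpa using hk)]
    rw [e1, e2, cs.getD_leftInvSeq, cs.getD_rightInvSeq]
    rw [List.getElem?_eq_getElem hk]
    simp only [Option.map_some, Option.getD_some]
    rw [wordProd_split cs ω k hk]
    group

lemma conj_eq_iff (c u v : W) : c⁻¹ * u * c = v ↔ u = c * v * c⁻¹ := by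
  constructor
  · intro h; rw [← h]; group
  · intro h; rw [h]; group

lemma eta_refl_self {t : W} (ht : cs.IsReflection t) : eta cs t t = -1 := by
  obtain ⟨w, a, rfl⟩ := ht
  obtain ⟨ω, rfl⟩ := cs.wordProd_surjective w
  have hρ : π ω * s a * (π ω)⁻¹ = π (ω ++ ([a] ++ ω.reverse)) := by
    rw [cs.wordProd_append, cs.wordProd_append, cs.wordProd_reverse]
    simp [mul_assoc]
  set t := π ω * s a * (π ω)⁻¹ with hts
  nth_rewrite 1 [hρ]
  rw [eta_eq_count]
  rw [ris_append, ris_append]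
  simp only [List.count_append]
  have hπrev : π (ω.reverse) = (π ω)⁻¹ := cs.wordProd_reverse ω
  have c1 : ((ris ω).map
      (fun u => (π ([a] ++ ω.reverse))⁻¹ * u * (π ([a] ++ ω.reverse)))).count t
        = (ris ω).count (s a) := by
    apply count_map_eq
    intro u
    rw [cs.wordProd_append, hπrev, cs.wordProd_singleton, conj_eq_iff, hts]
    constructor
    · intro h; rw [h]; group
    · intro h; rw [h]; group
  have c2 : ((ris [a]).map
      (fun u => (π ω.reverse)⁻¹ * u * (π ω.reverse))).count t = 1 := by
    rw [cs.rightInvSeq_singleton]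
    simp only [List.map_cons, List.map_nil]
    rw [hπrev, hts]
    have : (π ω)⁻¹⁻¹ * s a * (π ω)⁻¹ = π ω * s a * (π ω)⁻¹ := by group
    rw [this]
    simp
  have c3 : (ris ω.reverse).count t = (ris ω).count (s a) := by
    rw [cs.rightInvSeq_reverse, List.count_reverse, lis_eq_map_conj]
    apply count_map_eq
    intro u
    have : (fun u => π ω * u * (π ω)⁻¹) u = (π ω)⁻¹⁻¹ * u * (π ω)⁻¹ := by group
    rw [show π ω * u * (π ω)⁻¹ = (π ω)⁻¹⁻¹ * u * (π ω)⁻¹ by group, conj_eq_iff, hts]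
    constructor
    · intro h; rw [h]; group
    · intro h; rw [h]; group
  rw [c1, c2, c3]
  exact Odd.neg_one_pow ⟨(ris ω).count (s a), by ring⟩

lemma eta_neg_iff {t : W} (ht : cs.IsReflection t) (w : W) :
    cs.IsRightInversion w t ↔ eta cs w t = -1 := by
  constructor
  · intro hinv
    have hw : w = (w * t) * t := by
      rw [mul_assoc, ht.mul_self, mul_one]
    have h1 : eta cs ((w * t) * t) t = eta cs t t * eta cs (w * t) (t * t * t⁻¹) := eta_mul cs _ _ _
    have h2 : t * t * t⁻¹ = t := by group
    have h3 : eta cs (w * t) t = 1 := by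
      rcases Int.units_eq_one_or (eta cs (w * t) t) with h | h
      · exact h
      · exfalso
        obtain ⟨ω, hred, hπ⟩ := cs.exists_reduced_word' (w * t)
        rw [hπ, eta_eq_count] at h
        have hodd : Odd ((ris ω).count t) := by
          by_contra hev
          rw [Nat.not_odd_iff_even] at hev
          rw [Even.neg_one_pow hev] at h
          exact absurd h (by decide)
        have hmem : t ∈ ris ω := by
          rw [← List.count_pos_iff]
          obtain ⟨c, hc⟩ := hodd
          omega
        have := cs.isRightInversion_of_mem_rightInvSeq hred hmem
        rw [← hπ] at this
        have hlt := this.2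
        rw [mul_assoc, ht.mul_self, mul_one] at hlt
        exact absurd hinv.2 (by omega)
    rw [hw, h1, h2, h3, eta_refl_self cs ht, mul_one]
  · intro h
    obtain ⟨ω, hred, hπ⟩ := cs.exists_reduced_word' w
    rw [hπ, eta_eq_count] at h
    have hodd : Odd ((ris ω).count t) := by
      by_contra hev
      rw [Nat.not_odd_iff_even] at hev
      rw [Even.neg_one_pow hev] at h
      exact absurd h (by decide)
    have hmem : t ∈ ris ω := by
      rw [← List.count_pos_iff]
      obtain ⟨c, hc⟩ := hodd
      omega
    rw [hπ]
    exact cs.isRightInversion_of_mem_rightInvSeq hred hmem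

/-- strong exchange, membership form -/
lemma mem_ris_of_inversion {ω : List B} (hred : cs.IsReduced ω) {t : W}
    (hinv : cs.IsRightInversion (π ω) t) : t ∈ ris ω := by
  have h := (eta_neg_iff cs hinv.1 (π ω)).mp hinv
  rw [eta_eq_count] at h
  have hodd : Odd ((ris ω).count t) := by
    by_contra hev
    rw [Nat.not_odd_iff_even] at hev
    rw [Even.neg_one_pow hev] at h
    exact absurd h (by decide)
  rw [← List.count_pos_iff]
  obtain ⟨c, hc⟩ := hodd
  omega

/-- the lifting lemma -/
lemma lifting {u : W} {i j : B} (h1 : ℓ (s j * u) = ℓ u + 1)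
    (h2 : ℓ (u * s i) = ℓ u + 1) (h3 : ℓ (s j * u * s i) = ℓ u) :
    s j * u = u * s i := by
  set t : W := u⁻¹ * s j * u with htd
  have hrt : cs.IsReflection t := by
    have := (cs.isReflection_simple j).conj u⁻¹
    simpa [htd] using this
  have hrt2 : cs.IsReflection (s i * t * s i) := by
    have := hrt.conj (s i)
    simpa [cs.inv_simple] using this
  have hinv : cs.IsRightInversion (u * s i) (s i * t * s i) := by
    refine ⟨hrt2, ?_⟩
    have he : u * s i * (s i * t * s i) = s j * u * s i := by
      rw [htd]
      simp only [mul_assoc, cs.simple_mul_simple_cancel_left]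
      group
    rw [he, h3, h2]
    omega
  have heq : eta cs (u * s i) (s i * t * s i) = -1 := (eta_neg_iff cs hrt2 _).mp hinv
  have hcoc : eta cs (u * s i) (s i * t * s i)
      = eta cs (s i) (s i * t * s i) * eta cs u (s i * (s i * t * s i) * (s i)⁻¹) :=
    eta_mul cs u (s i) _
  have hsimp : s i * (s i * t * s i) * (s i)⁻¹ = t := by
    simp only [cs.inv_simple, mul_assoc, cs.simple_mul_simple_cancel_left]
    simp [cs.simple_mul_simple_cancel_right]
  have hetau : eta cs u t = 1 := by
    rcases Int.units_eq_one_or (eta cs u t) with h | h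
    · exact h
    · exfalso
      have hinvu := (eta_neg_iff cs hrt u).mpr h
      have := hinvu.2
      rw [htd] at this
      rw [show u * (u⁻¹ * s j * u) = s j * u by group] at this
      omega
  rw [hcoc, hsimp, hetau, mul_one] at heq
  rw [eta_simple] at heq
  by_cases hc : s i * t * s i = s i
  · rw [htd] at hc
    have : u⁻¹ * s j * u = s i := by
      have := congrArg (fun z => s i * z * s i) hc
      simpa [mul_assoc, cs.simple_mul_simple_cancel_left, cs.simple_mul_simple_self,
        cs.simple_mul_simple_cancel_right] using this
    calc s j * u = u * (u⁻¹ * s j * u) := by group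
    _ = u * s i := by rw [this]
  · rw [if_neg hc] at heq
    exact absurd heq (by decide)


/-! ### Part II : the 0-Hecke (Demazure) right action on W -/

def dstep (v : W) (i : B) : W := if cs.IsRightDescent v i then v else v * s i

def act (u : W) (l : List B) : W := l.foldl (dstep cs) u

@[simp] lemma act_nil (u : W) : act cs u [] = u := rfl

lemma act_cons (u : W) (i : B) (l : List B) :
    act cs u (i :: l) = act cs (dstep cs u i) l := rfl

lemma act_append (u : W) (l₁ l₂ : List B) :
    act cs u (l₁ ++ l₂) = act cs (act cs u l₁) l₂ := List.foldl_append

lemma act_concat (u : W) (l : List B) (i : B) :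
    act cs u (l ++ [i]) = dstep cs (act cs u l) i := by
  rw [act_append]; rfl

lemma dstep_of_desc {v : W} {i : B} (h : cs.IsRightDescent v i) : dstep cs v i = v :=
  if_pos h

lemma dstep_of_not_desc {v : W} {i : B} (h : ¬ cs.IsRightDescent v i) :
    dstep cs v i = v * s i := if_neg h

lemma isRightDescent_dstep (v : W) (i : B) : cs.IsRightDescent (dstep cs v i) i := by
  by_cases h : cs.IsRightDescent v i
  · rwa [dstep_of_desc cs h]
  · rw [dstep_of_not_desc cs h]
    unfold CoxeterSystem.IsRightDescent at *
    rw [cs.simple_mul_simple_cancel_right]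
    rcases cs.length_mul_simple v i with hh | hh <;> omega

lemma length_dstep_ge (v : W) (i : B) : ℓ v ≤ ℓ (dstep cs v i) := by
  by_cases h : cs.IsRightDescent v i
  · rw [dstep_of_desc cs h]
  · rw [dstep_of_not_desc cs h]
    unfold CoxeterSystem.IsRightDescent at h
    omega

lemma length_act_ge (l : List B) : ∀ u : W, ℓ u ≤ ℓ (act cs u l) := by
  induction l with
  | nil => intro u; simp
  | cons i l ih =>
    intro u
    rw [act_cons]
    exact le_trans (length_dstep_ge cs u i) (ih _)

/-- additivity of the action : `act u l = u * a` with additive lengths -/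
lemma act_add (l : List B) : ∀ u : W, ∃ a : W,
    act cs u l = u * a ∧ ℓ (u * a) = ℓ u + ℓ a := by
  induction l using List.reverseRecOn with
  | nil => intro u; exact ⟨1, by simp⟩
  | append_singleton l i ih =>
    intro u
    obtain ⟨a, h1, h2⟩ := ih u
    rw [act_concat, h1]
    by_cases h : cs.IsRightDescent (u * a) i
    · rw [dstep_of_desc cs h]
      exact ⟨a, rfl, h2⟩
    · rw [dstep_of_not_desc cs h]
      refine ⟨a * s i, by rw [mul_assoc], ?_⟩
      unfold CoxeterSystem.IsRightDescent at h
      have e1 : ℓ (u * a * s i) ≤ ℓ u + ℓ (a * s i) := by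
        rw [mul_assoc]; exact cs.length_mul_le u (a * s i)
      have e2 : ℓ (a * s i) ≤ ℓ a + 1 := by
        rcases cs.length_mul_simple a i with hh | hh <;> omega
      have e3 : ℓ (u * a * s i) = ℓ (u * a) + 1 := by
        rcases cs.length_mul_simple (u * a) i with hh | hh <;> omega
      rw [← mul_assoc]
      omega

lemma isLeftDescent_act {x : W} {j : B} (hld : cs.IsLeftDescent x j) (l : List B) :
    cs.IsLeftDescent (act cs x l) j := by
  obtain ⟨a, h1, h2⟩ := act_add cs l x
  rw [h1]
  unfold CoxeterSystem.IsLeftDescent at *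
  have e1 : ℓ (s j * (x * a)) ≤ ℓ (s j * x) + ℓ a := by
    rw [← mul_assoc]; exact cs.length_mul_le _ _
  omega

lemma act_one_eq {l : List B} (hred : cs.IsReduced l) : act cs 1 l = π l := by
  induction l using List.reverseRecOn with
  | nil => simp
  | append_singleton l i ih =>
    have hredl : cs.IsReduced l := by
      have := hred.take l.length
      rwa [List.take_left] at this
    have hlen : ℓ (π (l ++ [i])) = ℓ (π l) + 1 := by
      unfold CoxeterSystem.IsReduced at hred hredl
      have hlap : (l ++ [i]).length = l.length + 1 := by simp
      omega
    have hnd : ¬ cs.IsRightDescent (π l) i := by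
      unfold CoxeterSystem.IsRightDescent
      rw [cs.wordProd_append] at hlen
      simp only [cs.wordProd_singleton] at hlen
      omega
    rw [act_concat, ih hredl, dstep_of_not_desc cs hnd, cs.wordProd_append]
    simp

/-- key structure lemma : `act x l = y * (π l)` with additive lengths, for reduced `l` -/
lemma act_claimC {l : List B} (hred : cs.IsReduced l) : ∀ x : W, ∃ y : W,
    act cs x l = y * π l ∧ ℓ (y * π l) = ℓ y + ℓ (π l) := by
  induction l using List.reverseRecOn with
  | nil => intro x; exact ⟨x, by simp⟩
  | append_singleton l i ih =>
    intro x
    have hredl : cs.IsReduced l := by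
      have := hred.take l.length
      rwa [List.take_left] at this
    have hlen : ℓ (π (l ++ [i])) = ℓ (π l) + 1 := by
      unfold CoxeterSystem.IsReduced at hred hredl
      have hlap : (l ++ [i]).length = l.length + 1 := by simp
      omega
    have hπ : π (l ++ [i]) = π l * s i := by
      rw [cs.wordProd_append]; simp
    have hlen2 : ℓ (π l * s i) = ℓ (π l) + 1 := by rw [← hπ]; exact hlen
    obtain ⟨y, h1, h2⟩ := ih hredl x
    rw [act_concat, h1]
    by_cases h : cs.IsRightDescent (y * π l) i
    · -- exchange case
      obtain ⟨ωy, hredy, hy⟩ := cs.exists_reduced_word' y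
      have hy0 : ℓ y = ωy.length := by
        unfold CoxeterSystem.IsReduced at hredy
        rw [hy]
        omega
      have hredcat : cs.IsReduced (ωy ++ l) := by
        unfold CoxeterSystem.IsReduced at *
        rw [cs.wordProd_append, ← hy, List.length_append]
        omega
      have hinv : cs.IsRightInversion (π (ωy ++ l)) (s i) := by
        rw [cs.isRightInversion_simple_iff_isRightDescent]
        rw [cs.wordProd_append, ← hy]
        exact h
      have hmem := mem_ris_of_inversion cs hredcat hinv
      rw [ris_append] at hmem
      rcases List.mem_append.mp hmem with hm | hm
      · obtain ⟨r, hr, hconj⟩ := List.mem_map.mp hm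
        obtain ⟨k, hk, hget⟩ := List.mem_iff_getElem.mp hr
        have hgetD : (ris ωy).getD k 1 = r := by
          rw [List.getD_eq_getElem _ _ hk, hget]
        have herase : y * r = π (ωy.eraseIdx k) := by
          rw [← hgetD, hy]
          exact cs.wordProd_mul_getD_rightInvSeq ωy k
        set y' : W := π (ωy.eraseIdx k) with hy'
        have hr' : r = π l * s i * (π l)⁻¹ := by
          rw [← hconj]; group
        have hkey : y * π l = y' * π (l ++ [i]) := by
          rw [← herase, hr', hπ]
          rw [show y * (π l * s i * (π l)⁻¹) * (π l * s i) = y * (π l * (s i * s i)) from by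
            group]
          rw [cs.simple_mul_simple_self, mul_one]
        have hylen : ℓ y' ≤ ℓ y - 1 := by
          have hle : ℓ y' ≤ (ωy.eraseIdx k).length := cs.length_wordProd_le _
          have hklen : k < ωy.length := by
            have := hk; rwa [cs.length_rightInvSeq] at this
          have := List.length_eraseIdx_add_one hklen
          omega
      -- now conclude
        rw [dstep_of_desc cs h]
        refine ⟨y', hkey, ?_⟩
        have e1 : ℓ (y' * π (l ++ [i])) ≤ ℓ y' + ℓ (π (l ++ [i])) := cs.length_mul_le _ _
        have e2 : ℓ (y' * π (l ++ [i])) = ℓ y + ℓ (π l) := by rw [← hkey, h2]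
        have hy1 : 1 ≤ ℓ y := by
          by_contra hc
          push_neg at hc
          have hy00 : ℓ y = 0 := by omega
          have : y = 1 := cs.length_eq_zero_iff.mp hy00
          rw [this, one_mul] at h
          unfold CoxeterSystem.IsRightDescent at h
          omega
        omega
      · -- contradiction : i would be a descent of π l
        exfalso
        have := cs.isRightInversion_of_mem_rightInvSeq hredl hm
        rw [cs.isRightInversion_simple_iff_isRightDescent] at this
        unfold CoxeterSystem.IsRightDescent at this
        omega
    · rw [dstep_of_not_desc cs h]
      refine ⟨y, by rw [hπ, mul_assoc], ?_⟩
      unfold CoxeterSystem.IsRightDescent at h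
      have e3 : ℓ (y * π l * s i) = ℓ (y * π l) + 1 := by
        rcases cs.length_mul_simple (y * π l) i with hh | hh <;> omega
      rw [hπ, ← mul_assoc]
      omega

lemma length_act_ge_prod {l : List B} (hred : cs.IsReduced l) (x : W) :
    ℓ (π l) ≤ ℓ (act cs x l) := by
  obtain ⟨y, h1, h2⟩ := act_claimC cs hred x
  rw [h1]; omega

lemma act_eq_prod_of_length_eq {l : List B} (hred : cs.IsReduced l) {x : W}
    (h : ℓ (act cs x l) = ℓ (π l)) : act cs x l = π l := by
  obtain ⟨y, h1, h2⟩ := act_claimC cs hred x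
  rw [h1] at h ⊢
  have : ℓ y = 0 := by omega
  rw [cs.length_eq_zero_iff.mp this, one_mul]

lemma act_eq_self_letters {x : W} : ∀ {l : List B}, act cs x l = x →
    ∀ i ∈ l, cs.IsRightDescent x i := by
  intro l
  induction l with
  | nil => intro _ i hi; simp at hi
  | cons j l ih =>
    intro h i hi
    rw [act_cons] at h
    have hle : ℓ (dstep cs x j) ≤ ℓ x := by
      have := length_act_ge cs l (dstep cs x j)
      rw [h] at this
      exact this
    have hdesc : cs.IsRightDescent x j := by
      by_contra hc
      rw [dstep_of_not_desc cs hc] at hle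
      unfold CoxeterSystem.IsRightDescent at hc
      rcases cs.length_mul_simple x j with hh | hh <;> omega
    have hstep : dstep cs x j = x := dstep_of_desc cs hdesc
    rw [hstep] at h
    rcases List.mem_cons.mp hi with rfl | hil
    · exact hdesc
    · exact ih h i hil

/-- deletion : every word has a reduced subword-like word with the same product,
letters taken from the same set -/
lemma deletion (P : B → Prop) : ∀ (ω : List B), (∀ i ∈ ω, P i) →
    ∃ ω', cs.IsReduced ω' ∧ (∀ i ∈ ω', P i) ∧ π ω' = π ω := by
  intro ω
  induction ω using List.reverseRecOn with
  | nil => intro _; exact ⟨[], by simp [CoxeterSystem.IsReduced], by simp, rfl⟩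
  | append_singleton ω i ih =>
    intro hP
    obtain ⟨ω', hred', hP', hπ'⟩ := ih (fun j hj => hP j (by simp [hj]))
    have hPi : P i := hP i (by simp)
    by_cases h : cs.IsRightDescent (π ω') i
    · -- delete
      have hinv : cs.IsRightInversion (π ω') (s i) := by
        rw [cs.isRightInversion_simple_iff_isRightDescent]; exact h
      have hmem := mem_ris_of_inversion cs hred' hinv
      obtain ⟨k, hk, hget⟩ := List.mem_iff_getElem.mp hmem
      have hgetD : (ris ω').getD k 1 = s i := by
        rw [List.getD_eq_getElem _ _ hk, hget]
      have herase : π ω' * s i = π (ω'.eraseIdx k) := by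
        rw [← hgetD]
        exact cs.wordProd_mul_getD_rightInvSeq ω' k
      have hklen : k < ω'.length := by
        have := hk; rwa [cs.length_rightInvSeq] at this
      refine ⟨ω'.eraseIdx k, ?_, ?_, ?_⟩
      · unfold CoxeterSystem.IsReduced at hred' ⊢
        rw [← herase]
        have e1 : ℓ (π ω' * s i) + 1 = ℓ (π ω') := by
          unfold CoxeterSystem.IsRightDescent at h
          rcases cs.length_mul_simple (π ω') i with hh | hh <;> omega
        have := List.length_eraseIdx_add_one hklen
        omega
      · intro j hj
        exact hP' j ((List.eraseIdx_sublist ω' k).subset hj)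
      · rw [← herase, hπ', cs.wordProd_append]
        simp
    · refine ⟨ω' ++ [i], ?_, ?_, ?_⟩
      · unfold CoxeterSystem.IsReduced at hred' ⊢
        rw [cs.wordProd_append, cs.wordProd_singleton, List.length_append]
        unfold CoxeterSystem.IsRightDescent at h
        have hsl : ([i] : List B).length = 1 := rfl
        rcases cs.length_mul_simple (π ω') i with hh | hh <;> omega
      · intro j hj
        rcases List.mem_append.mp hj with hj | hj
        · exact hP' j hj
        · simp at hj; rwa [hj]
      · rw [cs.wordProd_append, cs.wordProd_append, hπ']


/-! ### Part III : operators on basis vectors -/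

lemma lift_single (f : W → MonoidAlgebra ℂ W) (u : W) :
    ((Finsupp.lift (MonoidAlgebra ℂ W) ℂ W f) ∘ₗ (MonoidAlgebra.coeffLinearEquiv ℂ).toLinearMap)
      (MonoidAlgebra.single u (1 : ℂ)) = f u := by
  show Finsupp.lift (MonoidAlgebra ℂ W) ℂ W f (Finsupp.single u (1 : ℂ)) = f u
  rw [Finsupp.lift_apply]
  rw [Finsupp.sum_single_index (by simp)]
  simp

lemma sigmaOp_single (i : B) (u : W) :
    sigmaOp cs i (MonoidAlgebra.single u (1:ℂ)) = MonoidAlgebra.single (u * s i) (1:ℂ) :=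
  lift_single _ u

lemma piOp_single (i : B) (u : W) :
    piOp cs i (MonoidAlgebra.single u (1:ℂ)) = MonoidAlgebra.single (dstep cs u i) (1:ℂ) := by
  unfold piOp dstep
  refine (lift_single _ u).trans ?_
  split_ifs <;> rfl

lemma rOp_single (w u : W) :
    rOp w (MonoidAlgebra.single u (1:ℂ)) = MonoidAlgebra.single (u * w) (1:ℂ) :=
  lift_single _ u

/-- extensionality on basis vectors -/
lemma end_ext {f g : Module.End ℂ (MonoidAlgebra ℂ W)}
    (h : ∀ u : W, f (MonoidAlgebra.single u 1) = g (MonoidAlgebra.single u 1)) : f = g := by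
  refine LinearMap.ext fun x => ?_
  induction x using MonoidAlgebra.induction_linear with
  | zero => simp
  | add x y hx hy => rw [map_add, map_add, hx, hy]
  | single a b =>
  have hb : (MonoidAlgebra.single a b : MonoidAlgebra ℂ W) = b • MonoidAlgebra.single a (1:ℂ) := by
    rw [MonoidAlgebra.smul_single, smul_eq_mul, mul_one]
  rw [hb, map_smul, map_smul]
  exact congrArg (fun t => b • t) (h a)

lemma msingle_coeff (a z : W) (b : ℂ) :
    (MonoidAlgebra.single a b : MonoidAlgebra ℂ W) z = if a = z then b else 0 :=
  Finsupp.single_apply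

lemma sigmaOp_coeff (i : B) (x : MonoidAlgebra ℂ W) (z : W) :
    (sigmaOp cs i x) z = x (z * s i) := by
  induction x using MonoidAlgebra.induction_linear with
  | zero => simp
  | add f g hf hg => rw [map_add, MonoidAlgebra.coeff_add, Finsupp.add_apply, hf, hg,
      MonoidAlgebra.coeff_add, Finsupp.add_apply]
  | single a b =>
    have hb : (MonoidAlgebra.single a b : MonoidAlgebra ℂ W) = b • MonoidAlgebra.single a (1:ℂ) := by
      rw [MonoidAlgebra.smul_single, smul_eq_mul, mul_one]
    rw [hb, map_smul, sigmaOp_single, MonoidAlgebra.coeff_smul, MonoidAlgebra.coeff_smul,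
      Finsupp.smul_apply, Finsupp.smul_apply,
      msingle_coeff, msingle_coeff]
    have hiff : (a * s i = z) ↔ (a = z * s i) := by
      constructor
      · intro h; rw [← h, cs.simple_mul_simple_cancel_right]
      · intro h; rw [h, cs.simple_mul_simple_cancel_right]
    by_cases h : a * s i = z
    · rw [if_pos h, if_pos (hiff.mp h)]
    · rw [if_neg h, if_neg (fun hc => h (hiff.mpr hc))]

lemma dstep_eq_iff (a z : W) (i : B) :
    dstep cs a i = z ↔ (cs.IsRightDescent z i ∧ (a = z ∨ a = z * s i)) := by
  constructor
  · intro h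
    have hd : cs.IsRightDescent z i := by rw [← h]; exact isRightDescent_dstep cs a i
    refine ⟨hd, ?_⟩
    by_cases hc : cs.IsRightDescent a i
    · left; rw [← h, dstep_of_desc cs hc]
    · right
      rw [dstep_of_not_desc cs hc] at h
      rw [← h, cs.simple_mul_simple_cancel_right]
  · rintro ⟨hd, (rfl | rfl)⟩
    · exact dstep_of_desc cs hd
    · have hnd : ¬ cs.IsRightDescent (z * s i) i := by
        unfold CoxeterSystem.IsRightDescent at hd ⊢
        rw [cs.simple_mul_simple_cancel_right]
        omega
      rw [dstep_of_not_desc cs hnd, cs.simple_mul_simple_cancel_right]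

lemma piOp_coeff (i : B) (x : MonoidAlgebra ℂ W) (z : W) :
    (piOp cs i x) z = if cs.IsRightDescent z i then x z + x (z * s i) else 0 := by
  induction x using MonoidAlgebra.induction_linear with
  | zero => simp
  | add f g hf hg =>
    rw [map_add, MonoidAlgebra.coeff_add, Finsupp.add_apply, hf, hg, MonoidAlgebra.coeff_add,
      Finsupp.add_apply, Finsupp.add_apply]
    split_ifs <;> ring
  | single a b =>
    have hb : (MonoidAlgebra.single a b : MonoidAlgebra ℂ W) = b • MonoidAlgebra.single a (1:ℂ) := by
      rw [MonoidAlgebra.smul_single, smul_eq_mul, mul_one]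
    rw [hb, map_smul, piOp_single, MonoidAlgebra.coeff_smul, MonoidAlgebra.coeff_smul,
      Finsupp.smul_apply, Finsupp.smul_apply, Finsupp.smul_apply,
      msingle_coeff, msingle_coeff, msingle_coeff]
    have hne : z ≠ z * s i := by
      intro hc
      exact cs.length_mul_simple_ne z i (by rw [← hc])
    simp only [smul_eq_mul]
    by_cases hd : cs.IsRightDescent z i
    · rw [if_pos hd]
      by_cases h1 : a = z
      · rw [if_pos ((dstep_eq_iff cs a z i).mpr ⟨hd, Or.inl h1⟩), if_pos h1,
          if_neg (by rw [h1]; exact hne)]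
        ring
      · by_cases h2 : a = z * s i
        · rw [if_pos ((dstep_eq_iff cs a z i).mpr ⟨hd, Or.inr h2⟩), if_neg h1, if_pos h2]
          ring
        · rw [if_neg, if_neg h1, if_neg h2]
          · ring
          · intro hc
            rcases ((dstep_eq_iff cs a z i).mp hc).2 with hh | hh
            · exact h1 hh
            · exact h2 hh
    · rw [if_neg hd, if_neg]
      · simp
      · intro hc
        exact hd ((dstep_eq_iff cs a z i).mp hc).1


/-! ### Part III b : the antisymmetry-preserving space E -/

def IsAnti (j : B) (x : MonoidAlgebra ℂ W) : Prop := ∀ z : W, x (s j * z) = - x z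

def Preserves (f : Module.End ℂ (MonoidAlgebra ℂ W)) : Prop :=
  ∀ (j : B) (x : MonoidAlgebra ℂ W), IsAnti cs j x → IsAnti cs j (f x)

lemma preserves_one : Preserves cs (1 : Module.End ℂ (MonoidAlgebra ℂ W)) := by
  intro j x hx
  simpa using hx

lemma preserves_mul {f g} (hf : Preserves cs f) (hg : Preserves cs g) :
    Preserves cs (f * g) := by
  intro j x hx
  have := hf j (g x) (hg j x hx)
  simpa using this

lemma preserves_add {f g} (hf : Preserves cs f) (hg : Preserves cs g) :
    Preserves cs (f + g) := by
  intro j x hx z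
  rw [LinearMap.add_apply, MonoidAlgebra.coeff_add, Finsupp.add_apply, Finsupp.add_apply, hf j x hx z, hg j x hx z]
  ring

lemma preserves_smul (c : ℂ) {f} (hf : Preserves cs f) : Preserves cs (c • f) := by
  intro j x hx z
  rw [LinearMap.smul_apply, MonoidAlgebra.coeff_smul, Finsupp.smul_apply, Finsupp.smul_apply, hf j x hx z,
    smul_eq_mul, smul_eq_mul, mul_neg]

lemma preserves_neg {f} (hf : Preserves cs f) : Preserves cs (-f) := by
  intro j x hx z
  rw [LinearMap.neg_apply, MonoidAlgebra.coeff_neg, Finsupp.neg_apply, Finsupp.neg_apply, hf j x hx z, neg_neg]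

lemma preserves_sub {f g} (hf : Preserves cs f) (hg : Preserves cs g) :
    Preserves cs (f - g) := by
  rw [sub_eq_add_neg]
  exact preserves_add cs hf (preserves_neg cs hg)

lemma preserves_sigmaOp (i : B) : Preserves cs (sigmaOp cs i) := by
  intro j x hx z
  rw [sigmaOp_coeff, sigmaOp_coeff, mul_assoc, hx]

lemma preserves_piOp (i : B) : Preserves cs (piOp cs i) := by
  intro j x hx z
  rw [piOp_coeff, piOp_coeff]
  by_cases hD1 : cs.IsRightDescent (s j * z) i
  · by_cases hD0 : cs.IsRightDescent z i
    · rw [if_pos hD1, if_pos hD0, hx z, mul_assoc, hx (z * s i)]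
      ring
    · rw [if_pos hD1, if_neg hD0]
      unfold CoxeterSystem.IsRightDescent at hD1 hD0
      have hsm := cs.length_simple_mul (z * s i) j
      rw [← mul_assoc] at hsm
      rcases cs.length_simple_mul z j with hα | hβ
      · -- lifting applies with u := z
        have hzi : ℓ (z * s i) = ℓ z + 1 := by
          rcases cs.length_mul_simple z i with hh | hh <;> omega
        have hji : ℓ (s j * z * s i) = ℓ z := by
          rcases hsm with hh | hh <;> omega
        have hlift := lifting cs hα hzi hji
        have e1 : x (s j * z) = - x z := hx z
        rw [hlift] at e1
        rw [hlift, cs.simple_mul_simple_cancel_right, e1]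
        ring
      · exfalso
        have hzi : ℓ (z * s i) = ℓ z + 1 := by
          rcases cs.length_mul_simple z i with hh | hh <;> omega
        rcases hsm with hh | hh <;> omega
  · by_cases hD0 : cs.IsRightDescent z i
    · rw [if_neg hD1, if_pos hD0]
      unfold CoxeterSystem.IsRightDescent at hD1 hD0
      have hsm := cs.length_simple_mul (z * s i) j
      rw [← mul_assoc] at hsm
      rcases cs.length_simple_mul z j with hβ | hα
      · exfalso
        have h1 : ℓ (s j * z * s i) = ℓ (s j * z) + 1 := by
          rcases cs.length_mul_simple (s j * z) i with hh | hh <;> omega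
        have hzi : ℓ (z * s i) + 1 = ℓ z := by
          rcases cs.length_mul_simple z i with hh | hh <;> omega
        rcases hsm with hh | hh <;> omega
      · -- lifting with u := s j * z
        have hcancel : s j * (s j * z) = z := cs.simple_mul_simple_cancel_left j
        have hl1 : ℓ (s j * (s j * z)) = ℓ (s j * z) + 1 := by rw [hcancel]; omega
        have hl2 : ℓ ((s j * z) * s i) = ℓ (s j * z) + 1 := by
          rcases cs.length_mul_simple (s j * z) i with hh | hh <;> omega
        have hl3 : ℓ (s j * (s j * z) * s i) = ℓ (s j * z) := by
          rw [hcancel]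
          rcases cs.length_mul_simple z i with hh | hh <;> omega
        have hlift := lifting cs hl1 hl2 hl3
        rw [hcancel] at hlift
        -- hlift : z = s j * z * s i
        have e2 : z * s i = s j * z := by
          conv_lhs => rw [hlift]
          rw [cs.simple_mul_simple_cancel_right]
        rw [e2, hx z]
        ring
    · rw [if_neg hD1, if_neg hD0, neg_zero]

/-- every element of the Hecke group algebra preserves antisymmetries -/
lemma preserves_of_mem_adjoin {f : Module.End ℂ (MonoidAlgebra ℂ W)}
    (hf : f ∈ Algebra.adjoin ℂ (Set.range (sigmaOp cs) ∪ Set.range (piOp cs))) :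
    Preserves cs f := by
  induction hf using Algebra.adjoin_induction with
  | mem g hg =>
    rcases hg with hg | hg
    · obtain ⟨i, rfl⟩ := hg
      exact preserves_sigmaOp cs i
    · obtain ⟨i, rfl⟩ := hg
      exact preserves_piOp cs i
  | algebraMap c =>
    intro j x hx z
    rw [Module.algebraMap_end_apply, MonoidAlgebra.coeff_smul, Finsupp.smul_apply, Finsupp.smul_apply, hx z,
      smul_eq_mul, smul_eq_mul, mul_neg]
  | add g h hg hh hg' hh' => exact preserves_add cs hg' hh'
  | mul g h hg hh hg' hh' => exact preserves_mul cs hg' hh'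

/-! ### piWord and sigma words -/

lemma piWord_cons (i : B) (l : List B) :
    piWord cs (i :: l) = piWord cs l * piOp cs i := by
  unfold piWord
  rw [List.reverse_cons, List.map_append, List.prod_append]
  simp

lemma piWord_single (l : List B) : ∀ u : W,
    piWord cs l (MonoidAlgebra.single u (1:ℂ)) = MonoidAlgebra.single (act cs u l) (1:ℂ) := by
  induction l with
  | nil => intro u; rfl
  | cons i l ih =>
    intro u
    rw [piWord_cons, Module.End.mul_apply, piOp_single, ih, act_cons]

lemma preserves_piWord (l : List B) : Preserves cs (piWord cs l) := by
  induction l with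
  | nil => exact preserves_one cs
  | cons i l ih =>
    rw [piWord_cons]
    exact preserves_mul cs ih (preserves_piOp cs i)

def sigmaWord (l : List B) : Module.End ℂ (MonoidAlgebra ℂ W) :=
  (l.reverse.map (sigmaOp cs)).prod

lemma sigmaWord_cons (i : B) (l : List B) :
    sigmaWord cs (i :: l) = sigmaWord cs l * sigmaOp cs i := by
  unfold sigmaWord
  rw [List.reverse_cons, List.map_append, List.prod_append]
  simp

lemma sigmaWord_single (l : List B) : ∀ u : W,
    sigmaWord cs l (MonoidAlgebra.single u (1:ℂ)) = MonoidAlgebra.single (u * π l) (1:ℂ) := by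
  induction l with
  | nil => intro u; show MonoidAlgebra.single u 1 = _; rw [cs.wordProd_nil, mul_one]
  | cons i l ih =>
    intro u
    rw [sigmaWord_cons, Module.End.mul_apply, sigmaOp_single, ih, cs.wordProd_cons, ← mul_assoc]

lemma rOp_eq_sigmaWord (l : List B) : rOp (π l) = sigmaWord cs l := by
  apply end_ext
  intro u
  rw [rOp_single, sigmaWord_single]

/-! ### the uniqueness lemma -/

lemma isAnti_pair (j : B) (u : W) :
    IsAnti cs j (MonoidAlgebra.single u (1:ℂ) - MonoidAlgebra.single (s j * u) (1:ℂ)) := by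
  intro z
  rw [MonoidAlgebra.coeff_sub, Finsupp.sub_apply, Finsupp.sub_apply, msingle_coeff, msingle_coeff, msingle_coeff,
    msingle_coeff]
  have h1 : (u = s j * z) ↔ (s j * u = z) := by
    constructor
    · intro h; rw [h, cs.simple_mul_simple_cancel_left]
    · intro h; rw [← h, cs.simple_mul_simple_cancel_left]
  have h2 : (s j * u = s j * z) ↔ (u = z) := by
    constructor
    · intro h; exact mul_left_cancel h
    · intro h; rw [h]
  by_cases c1 : u = s j * z <;> by_cases c2 : u = z
  · rw [if_pos c1, if_pos ((h2.mpr c2)), if_pos c2, if_pos (h1.mp c1)]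
    ring
  · rw [if_pos c1, if_neg (fun hc => c2 (h2.mp hc)), if_neg c2, if_pos (h1.mp c1)]
    ring
  · rw [if_neg c1, if_pos (h2.mpr c2), if_pos c2, if_neg (fun hc => c1 (h1.mpr hc))]
    ring
  · rw [if_neg c1, if_neg (fun hc => c2 (h2.mp hc)), if_neg c2,
      if_neg (fun hc => c1 (h1.mpr hc))]
    ring

/-- Lemma U : an antisymmetry-preserving operator vanishing on all admissible
coordinates is zero -/
lemma lemmaU {f : Module.End ℂ (MonoidAlgebra ℂ W)} (hf : Preserves cs f)
    (hvan : ∀ w w' : W, (∀ i : B, ¬ (cs.IsRightDescent w i ∧ cs.IsLeftDescent w' i)) →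
      (f (MonoidAlgebra.single w⁻¹ (1:ℂ))) w' = 0) : f = 0 := by
  have key : ∀ n : ℕ, ∀ u : W, ℓ u = n → f (MonoidAlgebra.single u (1:ℂ)) = 0 := by
    intro n
    induction n using Nat.strong_induction_on with
    | _ n ih =>
      intro u hu
      have hanti : ∀ j : B, cs.IsLeftDescent u j →
          ∀ z, (f (MonoidAlgebra.single u (1:ℂ))) (s j * z)
            = - (f (MonoidAlgebra.single u (1:ℂ))) z := by
        intro j hj
        have hlen : ℓ (s j * u) < n := by
          unfold CoxeterSystem.IsLeftDescent at hj
          omega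
        have h0 : f (MonoidAlgebra.single (s j * u) (1:ℂ)) = 0 := ih _ hlen _ rfl
        have hx := hf j _ (isAnti_pair cs j u)
        rw [map_sub, h0, sub_zero] at hx
        exact hx
      have hco : ∀ m : ℕ, ∀ z : W, ℓ z = m → (f (MonoidAlgebra.single u (1:ℂ))) z = 0 := by
        intro m
        induction m using Nat.strong_induction_on with
        | _ m ihm =>
          intro z hz
          by_cases hex : ∃ j, cs.IsLeftDescent u j ∧ cs.IsLeftDescent z j
          · obtain ⟨j, hju, hjz⟩ := hex
            have h1 := hanti j hju (s j * z)
            rw [cs.simple_mul_simple_cancel_left] at h1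
            have h2 : ℓ (s j * z) < m := by
              unfold CoxeterSystem.IsLeftDescent at hjz
              omega
            rw [h1, ihm _ h2 _ rfl, neg_zero]
          · push_neg at hex
            have hadm : ∀ i : B, ¬ (cs.IsRightDescent u⁻¹ i ∧ cs.IsLeftDescent z i) := by
              intro i hc
              exact hex i (cs.isRightDescent_inv_iff.mp hc.1) hc.2
            have := hvan u⁻¹ z hadm
            rwa [inv_inv] at this
      exact MonoidAlgebra.coeff_injective (Finsupp.ext fun z => hco (ℓ z) z rfl)
  apply end_ext
  intro u
  rw [key (ℓ u) u rfl]
  simp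

/-! ### Part (a) : well-definedness -/

lemma piWord_welldef {l₁ l₂ : List B} (h₁ : cs.IsReduced l₁) (h₂ : cs.IsReduced l₂)
    (heq : π l₁ = π l₂) : piWord cs l₁ = piWord cs l₂ := by
  have hsub : piWord cs l₁ - piWord cs l₂ = 0 := by
    apply lemmaU cs (preserves_sub cs (preserves_piWord cs l₁) (preserves_piWord cs l₂))
    intro w w' hadm
    rw [LinearMap.sub_apply, MonoidAlgebra.coeff_sub, Finsupp.sub_apply, piWord_single, piWord_single]
    by_cases hw : w = 1
    · rw [hw, inv_one, act_one_eq cs h₁, act_one_eq cs h₂, heq]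
      ring
    · have hkey : ∀ l : List B, cs.IsReduced l → act cs w⁻¹ l ≠ w' := by
        intro l hl hc
        have hne : w⁻¹ ≠ 1 := by
          intro hc2
          exact hw (by rwa [inv_eq_one] at hc2)
        obtain ⟨j, hj⟩ := cs.exists_leftDescent_of_ne_one hne
        have h1 : cs.IsLeftDescent (act cs w⁻¹ l) j := isLeftDescent_act cs hj l
        rw [hc] at h1
        exact hadm j ⟨cs.isLeftDescent_inv_iff.mp hj, h1⟩
      rw [msingle_coeff, msingle_coeff, if_neg (hkey l₁ h₁), if_neg (hkey l₂ h₂)]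
      ring
  have := sub_eq_zero.mp hsub
  exact this

lemma act_welldef {l₁ l₂ : List B} (h₁ : cs.IsReduced l₁) (h₂ : cs.IsReduced l₂)
    (heq : π l₁ = π l₂) (u : W) : act cs u l₁ = act cs u l₂ := by
  have h := congrArg (fun f : Module.End ℂ (MonoidAlgebra ℂ W) =>
    f (MonoidAlgebra.single u (1:ℂ))) (piWord_welldef cs h₁ h₂ heq)
  simp only [piWord_single] at h
  by_contra hc
  have := MonoidAlgebra.single_inj.mp h
  rcases this with ⟨h1, _⟩ | ⟨h1, _⟩
  · exact hc h1
  · norm_num at h1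


/-! ### Part IV : the Demazure product and its properties -/

def rword (v : W) : List B := (cs.exists_reduced_word' v).choose

lemma rword_red (v : W) : cs.IsReduced (rword cs v) :=
  (cs.exists_reduced_word' v).choose_spec.1

lemma rword_prod (v : W) : π (rword cs v) = v :=
  ((cs.exists_reduced_word' v).choose_spec.2).symm

def star (u v : W) : W := act cs u (rword cs v)

lemma star_eq {l : List B} (hred : cs.IsReduced l) (u : W) :
    star cs u (π l) = act cs u l :=
  act_welldef cs (rword_red cs (π l)) hred (rword_prod cs (π l)) u

lemma star_one (u : W) : star cs u 1 = u := by
  have h1 := rword_red cs (1 : W)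
  have h2 := rword_prod cs (1 : W)
  have : (rword cs (1 : W)).length = 0 := by
    unfold CoxeterSystem.IsReduced at h1
    rw [h2] at h1
    rw [← h1, cs.length_one]
  rw [star, List.length_eq_zero_iff.mp this]
  rfl

lemma dstep_idem (v : W) (i : B) : dstep cs (dstep cs v i) i = dstep cs v i :=
  dstep_of_desc cs (isRightDescent_dstep cs v i)

lemma star_step (u v : W) (i : B) :
    dstep cs (star cs u v) i = star cs u (dstep cs v i) := by
  by_cases hd : cs.IsRightDescent v i
  · rw [dstep_of_desc cs hd]
    -- i is a right descent of star u v
    have hlen : ℓ (v * s i) + 1 = ℓ v := by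
      unfold CoxeterSystem.IsRightDescent at hd
      rcases cs.length_mul_simple v i with hh | hh <;> omega
    have hred2 : cs.IsReduced (rword cs (v * s i) ++ [i]) := by
      unfold CoxeterSystem.IsReduced at *
      have h1 := rword_red cs (v * s i)
      have h2 := rword_prod cs (v * s i)
      unfold CoxeterSystem.IsReduced at h1
      rw [h2] at h1
      rw [cs.wordProd_append, cs.wordProd_singleton, h2, cs.simple_mul_simple_cancel_right,
        List.length_append]
      have : ([i] : List B).length = 1 := rfl
      omega
    have hprod2 : π (rword cs (v * s i) ++ [i]) = v := by
      rw [cs.wordProd_append, cs.wordProd_singleton, rword_prod cs (v * s i),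
        cs.simple_mul_simple_cancel_right]
    have h3 := star_eq cs hred2 u
    rw [hprod2] at h3
    rw [h3, act_concat, dstep_idem]
  · rw [dstep_of_not_desc cs hd]
    have hlen : ℓ (v * s i) = ℓ v + 1 := by
      unfold CoxeterSystem.IsRightDescent at hd
      rcases cs.length_mul_simple v i with hh | hh <;> omega
    have hred2 : cs.IsReduced (rword cs v ++ [i]) := by
      unfold CoxeterSystem.IsReduced at *
      have h1 := rword_red cs v
      have h2 := rword_prod cs v
      unfold CoxeterSystem.IsReduced at h1
      rw [h2] at h1
      rw [cs.wordProd_append, cs.wordProd_singleton, h2, List.length_append]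
      have : ([i] : List B).length = 1 := rfl
      omega
    have hprod2 : π (rword cs v ++ [i]) = v * s i := by
      rw [cs.wordProd_append, cs.wordProd_singleton, rword_prod cs v]
    have h3 := star_eq cs hred2 u
    rw [hprod2] at h3
    rw [h3, act_concat]
    rfl

lemma act_star (m : List B) : ∀ u : W, act cs u m = star cs u (act cs 1 m) := by
  induction m using List.reverseRecOn with
  | nil => intro u; simp [star_one]
  | append_singleton m i ih =>
    intro u
    rw [act_concat, act_concat, ih, star_step]

lemma star_assoc (u v w : W) :
    star cs (star cs u v) w = star cs u (star cs v w) := by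
  have h1 : act cs u (rword cs v ++ rword cs w) = star cs (star cs u v) w := by
    rw [act_append]
    rfl
  have h2 : act cs u (rword cs v ++ rword cs w) = star cs u (star cs v w) := by
    rw [act_star]
    congr 1
    rw [act_append, act_one_eq cs (rword_red cs v), rword_prod]
    rfl
  rw [← h1, h2]

lemma act_of_length_add {l : List B} (hred : cs.IsReduced l) : ∀ u : W,
    ℓ (u * π l) = ℓ u + ℓ (π l) → act cs u l = u * π l := by
  induction l using List.reverseRecOn with
  | nil => intro u _; simp
  | append_singleton l i ih =>
    intro u h
    have hredl : cs.IsReduced l := by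
      have := hred.take l.length
      rwa [List.take_left] at this
    have hlen : ℓ (π (l ++ [i])) = ℓ (π l) + 1 := by
      unfold CoxeterSystem.IsReduced at hred hredl
      have hlap : (l ++ [i]).length = l.length + 1 := by simp
      omega
    have hπ : π (l ++ [i]) = π l * s i := by
      rw [cs.wordProd_append]; simp
    have hprefix : ℓ (u * π l) = ℓ u + ℓ (π l) := by
      have e1 : ℓ (u * π l) ≤ ℓ u + ℓ (π l) := cs.length_mul_le _ _
      have e2 : ℓ (u * π (l ++ [i])) ≤ ℓ (u * π l) + 1 := by
        rw [hπ, ← mul_assoc]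
        rcases cs.length_mul_simple (u * π l) i with hh | hh <;> omega
      omega
    have ihl := ih hredl u hprefix
    rw [act_concat, ihl]
    have hnd : ¬ cs.IsRightDescent (u * π l) i := by
      unfold CoxeterSystem.IsRightDescent
      have : u * π l * s i = u * π (l ++ [i]) := by
        rw [hπ, mul_assoc]
      rw [this]
      omega
    rw [dstep_of_not_desc cs hnd, hπ, mul_assoc]

lemma star_mul_of_add {u v : W} (h : ℓ (u * v) = ℓ u + ℓ v) : star cs u v = u * v := by
  have h2 := rword_prod cs v
  have := act_of_length_add cs (rword_red cs v) u (by rw [h2]; exact h)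
  rw [star, this, h2]

lemma star_simple_left (i : B) (z : W) :
    star cs (s i) z = if cs.IsLeftDescent z i then z else s i * z := by
  by_cases hd : cs.IsLeftDescent z i
  · rw [if_pos hd]
    unfold CoxeterSystem.IsLeftDescent at hd
    have hlen : ℓ (s i * z) + 1 = ℓ z := by
      rcases cs.length_simple_mul z i with hh | hh <;> omega
    have hred2 : cs.IsReduced (i :: rword cs (s i * z)) := by
      unfold CoxeterSystem.IsReduced
      have h1 := rword_red cs (s i * z)
      have h2 := rword_prod cs (s i * z)
      unfold CoxeterSystem.IsReduced at h1
      rw [h2] at h1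
      rw [cs.wordProd_cons, h2, cs.simple_mul_simple_cancel_left, List.length_cons]
      omega
    have hprod2 : π (i :: rword cs (s i * z)) = z := by
      rw [cs.wordProd_cons, rword_prod, cs.simple_mul_simple_cancel_left]
    have h3 := star_eq cs hred2 (s i)
    rw [hprod2] at h3
    rw [h3, act_cons]
    have hdesc : cs.IsRightDescent (s i) i := by
      unfold CoxeterSystem.IsRightDescent
      rw [cs.simple_mul_simple_self, cs.length_one, cs.length_simple]
      omega
    rw [dstep_of_desc cs hdesc]
    show act cs (s i) (rword cs (s i * z)) = z
    show star cs (s i) (s i * z) = z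
    have : ℓ (s i * (s i * z)) = ℓ (s i) + ℓ (s i * z) := by
      rw [cs.simple_mul_simple_cancel_left, cs.length_simple]
      omega
    rw [star_mul_of_add cs this, cs.simple_mul_simple_cancel_left]
  · rw [if_neg hd]
    unfold CoxeterSystem.IsLeftDescent at hd
    have hlen : ℓ (s i * z) = ℓ z + 1 := by
      rcases cs.length_simple_mul z i with hh | hh <;> omega
    apply star_mul_of_add
    rw [cs.length_simple]
    omega

/-- the mirror property -/
lemma star_inv (w : W) : ∀ n : ℕ, ∀ u : W, ℓ u = n → (star cs u w)⁻¹ = star cs w⁻¹ u⁻¹ := by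
  intro n
  induction n using Nat.strong_induction_on with
  | _ n ih =>
    intro u hu
    by_cases h1 : u = 1
    · rw [h1, inv_one, star_one]
      show (act cs 1 (rword cs w))⁻¹ = _
      rw [act_one_eq cs (rword_red cs w), rword_prod]
    · obtain ⟨j, hj⟩ := cs.exists_leftDescent_of_ne_one h1
      set u₂ := s j * u with hu₂
      have hu₂len : ℓ u₂ + 1 = ℓ u := by
        unfold CoxeterSystem.IsLeftDescent at hj
        rw [hu₂]
        rcases cs.length_simple_mul u j with hh | hh <;> omega
      have hucan : s j * u₂ = u := by rw [hu₂, cs.simple_mul_simple_cancel_left]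
      have hadd : ℓ (s j * u₂) = ℓ (s j) + ℓ u₂ := by
        rw [hucan, cs.length_simple]
        omega
      have hstep1 : star cs u w = star cs (s j) (star cs u₂ w) := by
        rw [← star_assoc, star_mul_of_add cs hadd, hucan]
      have hIH : (star cs u₂ w)⁻¹ = star cs w⁻¹ u₂⁻¹ := ih (ℓ u₂) (by omega) u₂ rfl
      set y := star cs u₂ w with hy
      have hndr : ¬ cs.IsRightDescent u₂⁻¹ j := by
        rw [cs.isRightDescent_inv_iff]
        intro hc
        unfold CoxeterSystem.IsLeftDescent at hc
        have h5 : ℓ (s j * u₂) = ℓ u := by rw [hucan]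
        omega
      have hinvu : u⁻¹ = dstep cs u₂⁻¹ j := by
        rw [dstep_of_not_desc cs hndr, ← hucan]
        rw [mul_inv_rev, cs.inv_simple]
      rw [hstep1, star_simple_left]
      by_cases hdy : cs.IsLeftDescent y j
      · rw [if_pos hdy, hinvu, ← star_step, ← hIH]
        have : cs.IsRightDescent y⁻¹ j := cs.isRightDescent_inv_iff.mpr hdy
        rw [dstep_of_desc cs this]
      · rw [if_neg hdy, hinvu, ← star_step, ← hIH]
        have : ¬ cs.IsRightDescent y⁻¹ j := fun hc => hdy (cs.isRightDescent_inv_iff.mp hc)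
        rw [dstep_of_not_desc cs this, mul_inv_rev, cs.inv_simple]

/-- structure of stabilizers -/
lemma stab_struct {x w' : W} (h : star cs x w' = w') :
    ∃ l : List B, cs.IsReduced l ∧ π l = x⁻¹ ∧ ∀ i ∈ l, cs.IsLeftDescent w' i := by
  have hm := star_inv cs w' (ℓ x) x rfl
  rw [h] at hm
  -- hm : w'⁻¹ = star cs w'⁻¹ x⁻¹
  have hself : act cs w'⁻¹ (rword cs x⁻¹) = w'⁻¹ := hm.symm
  refine ⟨rword cs x⁻¹, rword_red cs x⁻¹, rword_prod cs x⁻¹, ?_⟩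
  intro i hi
  have := act_eq_self_letters cs hself i hi
  exact cs.isRightDescent_inv_iff.mp this

/-- coset uniqueness for admissible elements -/
lemma coset_unique [Finite W] {w' : W} (w₁ w₂ : W)
    (h₁ : ∀ i : B, ¬ (cs.IsRightDescent w₁ i ∧ cs.IsLeftDescent w' i))
    (h₂ : ∀ i : B, ¬ (cs.IsRightDescent w₂ i ∧ cs.IsLeftDescent w' i))
    (hx : star cs (w₁⁻¹ * w₂) w' = w') : w₁ = w₂ := by
  obtain ⟨lx, hlxred, hlxprod, hlxJ⟩ := stab_struct cs hx
  set C : Set W := {v | ∃ ω : List B, (∀ i ∈ ω, cs.IsLeftDescent w' i) ∧ v = w₁ * π ω} with hC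
  have hw₁C : w₁ ∈ C := ⟨[], by simp, by simp⟩
  have hw₂C : w₂ ∈ C := by
    refine ⟨lx.reverse, ?_, ?_⟩
    · intro i hi
      exact hlxJ i (List.mem_reverse.mp hi)
    · rw [cs.wordProd_reverse, hlxprod]
      group
  have hCclosed : ∀ v ∈ C, ∀ (ω : List B), (∀ i ∈ ω, cs.IsLeftDescent w' i) → v * π ω ∈ C := by
    rintro v ⟨α, hα, rfl⟩ ω hω
    refine ⟨α ++ ω, ?_, ?_⟩
    · intro i hi
      rcases List.mem_append.mp hi with h | h
      · exact hα i h
      · exact hω i h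
    · rw [cs.wordProd_append, mul_assoc]
  obtain ⟨m, hmem⟩ := Set.exists_min_image C cs.length (Set.toFinite C) ⟨w₁, hw₁C⟩
  obtain ⟨hmC, hmin⟩ := hmem
  have hdesc : ∀ v ∈ C, v ≠ m → ∃ j, cs.IsLeftDescent w' j ∧ cs.IsRightDescent v j := by
    rintro v ⟨α, hα, rfl⟩ hne
    obtain ⟨β, hβ, hmval⟩ := hmC
    have hconn : w₁ * π α = m * π (β.reverse ++ α) := by
      rw [cs.wordProd_append, cs.wordProd_reverse, hmval]
      group
    obtain ⟨ωr, hωrred, hωrJ, hωrprod⟩ := deletion cs (fun i => cs.IsLeftDescent w' i)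
      (β.reverse ++ α) (by
        intro i hi
        rcases List.mem_append.mp hi with h | h
        · exact hβ i (List.mem_reverse.mp h)
        · exact hα i h)
    have hvmy : w₁ * π α = m * π ωr := by rw [hωrprod]; exact hconn
    rcases List.eq_nil_or_concat ωr with hnil | ⟨ωr', j, hcat⟩
    · exfalso
      apply hne
      rw [hvmy, hnil, cs.wordProd_nil, mul_one]
    · have hjJ : cs.IsLeftDescent w' j := hωrJ j (by rw [hcat]; simp)
      refine ⟨j, hjJ, ?_⟩
      have hys : π ωr * s j = π ωr' := by
        rw [hcat, List.concat_eq_append, cs.wordProd_append, cs.wordProd_singleton, mul_assoc,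
          cs.simple_mul_simple_self, mul_one]
      have hyinv : cs.IsRightInversion (π ωr) (s j) := by
        refine ⟨cs.isReflection_simple j, ?_⟩
        rw [hys]
        have e1 : ℓ (π ωr') ≤ ωr'.length := cs.length_wordProd_le ωr'
        unfold CoxeterSystem.IsReduced at hωrred
        have e2 : ωr.length = ωr'.length + 1 := by rw [hcat]; simp
        omega
      have htref : cs.IsReflection (π ωr * s j * (π ωr)⁻¹) :=
        (cs.isReflection_simple j).conj (π ωr)
      have hmtC : m * (π ωr * s j * (π ωr)⁻¹) ∈ C := by
        have hcl := hCclosed m ⟨β, hβ, hmval⟩ (ωr ++ [j] ++ ωr.reverse) (by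
          intro i hi
          rcases List.mem_append.mp hi with h | h
          · rcases List.mem_append.mp h with h' | h'
            · exact hωrJ i h'
            · simp at h'; rwa [h']
          · exact hωrJ i (List.mem_reverse.mp h))
        have heq2 : π (ωr ++ [j] ++ ωr.reverse) = π ωr * s j * (π ωr)⁻¹ := by
          rw [cs.wordProd_append, cs.wordProd_append, cs.wordProd_singleton,
            cs.wordProd_reverse]
        rwa [heq2] at hcl
      have hmt_gt : ℓ m < ℓ (m * (π ωr * s j * (π ωr)⁻¹)) := by
        have hge := hmin (m * (π ωr * s j * (π ωr)⁻¹)) hmtC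
        have hne2 : ℓ (m * (π ωr * s j * (π ωr)⁻¹)) ≠ ℓ m := by
          have hodd := htref.odd_length
          have hmod := cs.length_mul_mod_two m (π ωr * s j * (π ωr)⁻¹)
          obtain ⟨k, hk⟩ := hodd
          omega
        omega
      have hetam : eta cs m (π ωr * s j * (π ωr)⁻¹) = 1 := by
        rcases Int.units_eq_one_or (eta cs m (π ωr * s j * (π ωr)⁻¹)) with h | h
        · exact h
        · exfalso
          have hi2 := (eta_neg_iff cs htref m).mpr h
          have := hi2.2
          omega
      have hetay : eta cs (π ωr) (s j) = -1 :=
        (eta_neg_iff cs (cs.isReflection_simple j) (π ωr)).mp hyinv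
      have hetav : eta cs (m * π ωr) (s j) = -1 := by
        rw [eta_mul, hetay, hetam, mul_one]
      rw [hvmy]
      have hinv2 : cs.IsRightInversion (m * π ωr) (s j) :=
        (eta_neg_iff cs (cs.isReflection_simple j) (m * π ωr)).mpr hetav
      rw [← cs.isRightInversion_simple_iff_isRightDescent]
      exact hinv2
  have e₁ : w₁ = m := by
    by_contra h
    obtain ⟨j, hJ, hd⟩ := hdesc w₁ hw₁C h
    exact h₁ j ⟨hd, hJ⟩
  have e₂ : w₂ = m := by
    by_contra h
    obtain ⟨j, hJ, hd⟩ := hdesc w₂ hw₂C h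
    exact h₂ j ⟨hd, hJ⟩
  rw [e₁, e₂]


/-! ### Part V : final assembly -/

/-- the index type of admissible pairs -/
def admType (cs : CoxeterSystem M W) :=
  {p : W × W // ∀ i : B, ¬ (cs.IsRightDescent p.1 i ∧ cs.IsLeftDescent p.2 i)}

/-- the canonical family of operators -/
def Fop (p : admType cs) : Module.End ℂ (MonoidAlgebra ℂ W) :=
  piWord cs (rword cs p.1.2) * rOp p.1.1

/-- the admissible-coordinates functional -/
def Phi : Module.End ℂ (MonoidAlgebra ℂ W) →ₗ[ℂ] (admType cs → ℂ) where
  toFun f := fun q => (f (MonoidAlgebra.single q.1.1⁻¹ (1:ℂ))) q.1.2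
  map_add' f g := by
    funext q
    show ((f + g) (MonoidAlgebra.single q.1.1⁻¹ (1:ℂ))) q.1.2
      = (f (MonoidAlgebra.single q.1.1⁻¹ (1:ℂ))) q.1.2
        + (g (MonoidAlgebra.single q.1.1⁻¹ (1:ℂ))) q.1.2
    rw [LinearMap.add_apply, MonoidAlgebra.coeff_add, Finsupp.add_apply]
  map_smul' c f := by
    funext q
    show ((c • f) (MonoidAlgebra.single q.1.1⁻¹ (1:ℂ))) q.1.2
      = c • (f (MonoidAlgebra.single q.1.1⁻¹ (1:ℂ))) q.1.2
    rw [LinearMap.smul_apply, MonoidAlgebra.coeff_smul, Finsupp.smul_apply]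

lemma Fop_single (p : admType cs) (u : W) :
    Fop cs p (MonoidAlgebra.single u (1:ℂ))
      = MonoidAlgebra.single (act cs (u * p.1.1) (rword cs p.1.2)) (1:ℂ) := by
  unfold Fop
  rw [Module.End.mul_apply, rOp_single, piWord_single]

lemma Phi_Fop (p q : admType cs) :
    Phi cs (Fop cs p) q
      = if act cs (q.1.1⁻¹ * p.1.1) (rword cs p.1.2) = q.1.2 then (1:ℂ) else 0 := by
  show (Fop cs p (MonoidAlgebra.single q.1.1⁻¹ (1:ℂ))) q.1.2 = _
  rw [Fop_single, msingle_coeff]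

lemma Phi_Fop_diag (p : admType cs) : Phi cs (Fop cs p) p = 1 := by
  rw [Phi_Fop, if_pos]
  rw [inv_mul_cancel, act_one_eq cs (rword_red cs p.1.2), rword_prod]

lemma main_tri [Finite W] (p q : admType cs) (hne : p ≠ q)
    (heq : act cs (q.1.1⁻¹ * p.1.1) (rword cs p.1.2) = q.1.2) :
    ℓ p.1.2 < ℓ q.1.2 := by
  obtain ⟨y, h1, h2⟩ := act_claimC cs (rword_red cs p.1.2) (q.1.1⁻¹ * p.1.1)
  rw [rword_prod] at h1 h2
  by_contra hlt
  push_neg at hlt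
  have hq2 : q.1.2 = y * p.1.2 := by rw [← heq, h1]
  have hlen : ℓ q.1.2 = ℓ y + ℓ p.1.2 := by rw [hq2]; exact h2
  have hy0 : ℓ y = 0 := by omega
  have hy1 : y = 1 := cs.length_eq_zero_iff.mp hy0
  have hw' : q.1.2 = p.1.2 := by rw [hq2, hy1, one_mul]
  have hstar : star cs (q.1.1⁻¹ * p.1.1) p.1.2 = p.1.2 := by
    show act cs (q.1.1⁻¹ * p.1.1) (rword cs p.1.2) = p.1.2
    rw [heq, hw']
  have hadm_q : ∀ i : B, ¬ (cs.IsRightDescent q.1.1 i ∧ cs.IsLeftDescent p.1.2 i) := by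
    intro i hc
    exact q.2 i ⟨hc.1, by rw [hw']; exact hc.2⟩
  have := coset_unique cs q.1.1 p.1.1 hadm_q p.2 hstar
  apply hne
  apply Subtype.ext
  apply Prod.ext
  · exact this.symm
  · exact hw'.symm

lemma indep_PhiFop [Finite W] :
    LinearIndependent ℂ (fun p : admType cs => Phi cs (Fop cs p)) := by
  haveI : Finite (admType cs) := by
    unfold admType
    infer_instance
  haveI : Fintype (admType cs) := Fintype.ofFinite _
  rw [Fintype.linearIndependent_iff]
  intro c hc
  have key : ∀ n : ℕ, ∀ p : admType cs, ℓ p.1.2 = n → c p = 0 := by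
    intro n
    induction n using Nat.strong_induction_on with
    | _ n ih =>
      intro p hp
      have hcp := congrFun hc p
      rw [Finset.sum_apply] at hcp
      have hsum : ∀ q ∈ Finset.univ, q ≠ p →
          (c q • Phi cs (Fop cs q)) p = 0 := by
        intro q _ hqp
        rw [Pi.smul_apply, Phi_Fop, smul_eq_mul]
        by_cases hact : act cs (p.1.1⁻¹ * q.1.1) (rword cs q.1.2) = p.1.2
        · have hlt := main_tri cs q p hqp hact
          rw [ih (ℓ q.1.2) (by omega) q rfl]
          ring
        · rw [if_neg hact]
          ring
      rw [Finset.sum_eq_single_of_mem p (Finset.mem_univ p) hsum] at hcp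
      rw [Pi.smul_apply, Phi_Fop_diag, smul_eq_mul, mul_one] at hcp
      rw [show (0 : admType cs → ℂ) p = 0 from rfl] at hcp
      exact hcp
  intro p
  exact key (ℓ p.1.2) p rfl

lemma piWord_mem (l : List B) :
    piWord cs l ∈ Algebra.adjoin ℂ (Set.range (sigmaOp cs) ∪ Set.range (piOp cs)) := by
  induction l with
  | nil => exact one_mem _
  | cons i l ih =>
    rw [piWord_cons]
    exact mul_mem ih (Algebra.subset_adjoin (Set.mem_union_right _ ⟨i, rfl⟩))

lemma sigmaWord_mem (l : List B) :
    sigmaWord cs l ∈ Algebra.adjoin ℂ (Set.range (sigmaOp cs) ∪ Set.range (piOp cs)) := by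
  induction l with
  | nil => exact one_mem _
  | cons i l ih =>
    rw [sigmaWord_cons]
    exact mul_mem ih (Algebra.subset_adjoin (Set.mem_union_left _ ⟨i, rfl⟩))

lemma rOp_mem (w : W) :
    rOp w ∈ Algebra.adjoin ℂ (Set.range (sigmaOp cs) ∪ Set.range (piOp cs)) := by
  have h := rOp_eq_sigmaWord cs (rword cs w)
  rw [rword_prod] at h
  rw [h]
  exact sigmaWord_mem cs _

lemma Fop_mem (p : admType cs) :
    Fop cs p ∈ Algebra.adjoin ℂ (Set.range (sigmaOp cs) ∪ Set.range (piOp cs)) :=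
  mul_mem (piWord_mem cs _) (rOp_mem cs _)

lemma span_Fop_eq [Finite W] :
    Submodule.span ℂ (Set.range (Fop cs)) =
      Subalgebra.toSubmodule
        (Algebra.adjoin ℂ (Set.range (sigmaOp cs) ∪ Set.range (piOp cs))) := by
  haveI : Finite (admType cs) := by unfold admType; infer_instance
  haveI : Fintype (admType cs) := Fintype.ofFinite _
  apply le_antisymm
  · rw [Submodule.span_le]
    rintro f ⟨p, rfl⟩
    exact Fop_mem cs p
  · intro f hf
    have hfp : Preserves cs f := preserves_of_mem_adjoin cs hf
    -- Phi of the family spans everything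
    haveI : Nonempty (admType cs) :=
      ⟨⟨(1, 1), fun i hc => (cs.not_isRightDescent_one i) hc.1⟩⟩
    have htop : Submodule.span ℂ (Set.range (fun p : admType cs => Phi cs (Fop cs p))) = ⊤ := by
      apply (indep_PhiFop cs).span_eq_top_of_card_eq_finrank
      rw [Module.finrank_fintype_fun_eq_card]
    have hmem : Phi cs f ∈ Submodule.span ℂ
        (Set.range (fun p : admType cs => Phi cs (Fop cs p))) := by
      rw [htop]; trivial
    rw [Finsupp.mem_span_range_iff_exists_finsupp] at hmem
    obtain ⟨cc, hcc⟩ := hmem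
    set v : Module.End ℂ (MonoidAlgebra ℂ W) := cc.sum fun p a => a • Fop cs p with hv
    have hvmem : v ∈ Submodule.span ℂ (Set.range (Fop cs)) := by
      rw [hv]
      show (∑ p ∈ cc.support, cc p • Fop cs p) ∈ _
      exact Submodule.sum_mem _ fun p _ => Submodule.smul_mem _ _ (Submodule.subset_span ⟨p, rfl⟩)
    have hvphi : Phi cs v = Phi cs f := by
      rw [hv, map_finsuppSum, ← hcc]
      apply Finsupp.sum_congr
      intro p _
      rw [map_smul]
    have hvpres : Preserves cs v := by
      have hvhecke : v ∈ Algebra.adjoin ℂ (Set.range (sigmaOp cs) ∪ Set.range (piOp cs)) := by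
        rw [hv]
        show (∑ p ∈ cc.support, cc p • Fop cs p) ∈ _
        exact sum_mem fun p _ => Subalgebra.smul_mem _ (Fop_mem cs p) _
      exact preserves_of_mem_adjoin cs hvhecke
    have hg : f - v = 0 := by
      apply lemmaU cs (preserves_sub cs hfp hvpres)
      intro w w' hadm
      have h0 : Phi cs (f - v) = 0 := by rw [map_sub, hvphi, sub_self]
      exact congrFun h0 (⟨(w, w'), hadm⟩ : admType cs)
    have : f = v := by
      have := sub_eq_zero.mp hg
      exact this
    rw [this]
    exact hvmem


/-- (a) for each `w'`, the operator `π_{i_k} ∘ ⋯ ∘ π_{i_1}` associated to a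
reduced word `(i₁, …, i_k)` of `w'` does not depend on the chosen reduced word; (b) writing
`P w'` for the common value, the family of operators `x ↦ P w' (x · w)`, indexed by the
pairs `(w, w')` with `D_R(w) ∩ D_L(w') = ∅`, is a basis of the ℂ-vector space `H(W)`. -/
theorem piWord_reduced_well_defined_and_basis (cs : CoxeterSystem M W) [Finite W] :
    (∀ l₁ l₂ : List B, cs.IsReduced l₁ → cs.IsReduced l₂ →
      cs.wordProd l₁ = cs.wordProd l₂ → piWord cs l₁ = piWord cs l₂) ∧
    (∀ P : W → Module.End ℂ (MonoidAlgebra ℂ W),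
      (∀ l : List B, cs.IsReduced l → P (cs.wordProd l) = piWord cs l) →
      LinearIndependent ℂ
        (fun p : {p : W × W // ∀ i : B, ¬ (cs.IsRightDescent p.1 i ∧ cs.IsLeftDescent p.2 i)} =>
          P p.1.2 * rOp p.1.1) ∧
      Submodule.span ℂ
        (Set.range
          (fun p : {p : W × W // ∀ i : B, ¬ (cs.IsRightDescent p.1 i ∧ cs.IsLeftDescent p.2 i)} =>
            P p.1.2 * rOp p.1.1)) =
        Subalgebra.toSubmodule (heckeGroupAlgebra cs)) := by
  constructor
  · intro l₁ l₂ h₁ h₂ heq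
    exact piWord_welldef cs h₁ h₂ heq
  · intro P hP
    have hPw : ∀ w' : W, P w' = piWord cs (rword cs w') := by
      intro w'
      have h := hP (rword cs w') (rword_red cs w')
      rwa [rword_prod] at h
    have hFeq : (fun p : admType cs => P p.1.2 * rOp p.1.1)
        = fun p : admType cs => Fop cs p := by
      funext p
      show P p.1.2 * rOp p.1.1 = piWord cs (rword cs p.1.2) * rOp p.1.1
      rw [hPw]
    constructor
    · have h1 : LinearIndependent ℂ (fun p : admType cs => Fop cs p) :=
        LinearIndependent.of_comp (Phi cs) (indep_PhiFop cs)
      show LinearIndependent ℂ (fun p : admType cs => P p.1.2 * rOp p.1.1)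
      rw [hFeq]
      exact h1
    · show Submodule.span ℂ (Set.range (fun p : admType cs => P p.1.2 * rOp p.1.1)) = _
      rw [hFeq]
      show _ = Subalgebra.toSubmodule
        (Algebra.adjoin ℂ (Set.range (sigmaOp cs) ∪ Set.range (piOp cs)))
      exact span_Fop_eq cs

end HGA
end
end

section
/- The operators f_0, f_1, …, f_{n−1} act transitively on S_n: for all permutations u, v ∈ S_n there exists a finite composition g of maps taken from {f_0, f_1, …, f_{n−1}} such that g(u) = v. Equivalently, the submonoid of self-maps of S_n generated by {f_0, f_1, …, f_{n−1}} has a single orbit on S_n. -/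
open scoped Classical

noncomputable section

namespace AffineSorting

/-- The circular antisorting operators on `S_n` (permutations of `Fin n`,
i.e. of `{1, …, n}` written 0-indexed).  For `i : Fin n`, `bubble n i`
exchanges the entries of `w` in the (cyclically consecutive) positions `i` and
`i + 1` if the entry at position `i` is smaller than the entry at position
`i + 1`, and fixes `w` otherwise.  For `(i : ℕ) + 1 < n` this is the operator
`f_{i+1}` (1-indexed positions `i+1, i+2`), and for `i = n - 1` (so that `i + 1`
wraps around to `0`) this is the affine operator `f_0`, which exchanges the
entries in positions `1` and `n` (1-indexed) when `w(n) < w(1)`.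
Hence `{bubble n i : i : Fin n} = {f_0, f_1, …, f_{n-1}}`. -/
def bubble (n : ℕ) [NeZero n] (i : Fin n) : Function.End (Equiv.Perm (Fin n)) :=
  fun w => if w i < w (i + 1) then w * Equiv.swap i (i + 1) else w

/-! ### Infrastructure -/

open Fin.NatCast Fin.CommRing

variable {m : ℕ}

private def Step (m : ℕ) (u v : Equiv.Perm (Fin (m+1))) : Prop :=
  ∃ i, bubble (m+1) i u = v

private def R (m : ℕ) : Equiv.Perm (Fin (m+1)) → Equiv.Perm (Fin (m+1)) → Prop :=
  Relation.ReflTransGen (Step m)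

private lemma R_refl (w : Equiv.Perm (Fin (m+1))) : R m w w := Relation.ReflTransGen.refl

private lemma R_trans {a b c : Equiv.Perm (Fin (m+1))} (h1 : R m a b) (h2 : R m b c) :
    R m a c := Relation.ReflTransGen.trans h1 h2

private lemma R_swap (w : Equiv.Perm (Fin (m+1))) (a : Fin (m+1)) (h : w a < w (a+1)) :
    R m w (w * Equiv.swap a (a+1)) :=
  Relation.ReflTransGen.single ⟨a, by simp only [bubble]; rw [if_pos h]⟩

private lemma R_closure {u v : Equiv.Perm (Fin (m+1))} (h : R m u v) :
    ∃ g ∈ Submonoid.closure (Set.range (bubble (m+1))), g u = v := by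
  induction h with
  | refl => exact ⟨1, Submonoid.one_mem _, rfl⟩
  | tail hab hbc ih =>
    obtain ⟨g, hg, hgu⟩ := ih
    obtain ⟨i, hi⟩ := hbc
    exact ⟨bubble (m+1) i * g,
      Submonoid.mul_mem _ (Submonoid.subset_closure ⟨i, rfl⟩) hg,
      by show bubble (m+1) i (g u) = _; rw [hgu, hi]⟩

/-! ### Fin arithmetic helpers -/

private lemma val_cast {i : ℕ} (h : i < m+1) : ((i : Fin (m+1)) : ℕ) = i :=
  Fin.val_cast_of_lt h

private lemma cast_injF {i j : ℕ} (hi : i < m+1) (hj : j < m+1)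
    (h : (i : Fin (m+1)) = (j : Fin (m+1))) : i = j := by
  rw [← val_cast hi, ← val_cast hj, h]

private lemma add_cast_inj (q : Fin (m+1)) {i j : ℕ} (hi : i < m+1) (hj : j < m+1)
    (h : q + (i : Fin (m+1)) = q + (j : Fin (m+1))) : i = j :=
  cast_injF hi hj (by exact add_left_cancel h)

private lemma cast_sub {i ℓ : ℕ} (h : i ≤ ℓ) :
    ((ℓ - i : ℕ) : Fin (m+1)) = (ℓ : Fin (m+1)) - (i : Fin (m+1)) := by
  have h2 : ((ℓ - i : ℕ) : Fin (m+1)) + (i : Fin (m+1)) = (ℓ : Fin (m+1)) := by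
    rw [← Nat.cast_add, Nat.sub_add_cancel h]
  linear_combination h2

private lemma last_cast : (m : Fin (m+1)) = Fin.last m :=
  Fin.ext (val_cast (Nat.lt_succ_self m))

private lemma last_sub_val {i : ℕ} (h : i ≤ m) :
    ((Fin.last m - (i : Fin (m+1))).val) = m - i := by
  rw [← last_cast, ← cast_sub h]
  exact val_cast (by omega)

private lemma val_sub_one {X : Fin (m+1)} (h : X ≠ 0) : (X - 1).val = X.val - 1 := by
  have hpos : 0 < X.val := by
    rcases Nat.eq_zero_or_pos X.val with h0 | h0
    · exact absurd (Fin.ext h0) h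
    · exact h0
  have h1 : ((X.val - 1 : ℕ) : Fin (m+1)) = X - 1 := by
    rw [cast_sub hpos, Fin.cast_val_eq_self, Nat.cast_one]
  rw [← h1]
  exact val_cast (by omega)

/-! ### The pass lemmas -/

/-- A small entry at position `q` can bubble cyclically rightward past `len` larger
entries. -/
private lemma pass (len : ℕ) : ∀ (w : Equiv.Perm (Fin (m+1))) (q : Fin (m+1)),
    len < m + 1 →
    (∀ j : ℕ, 0 < j → j ≤ len → w q < w (q + (j : Fin (m+1)))) →
    ∃ w', R m w w' ∧
      (∀ i : ℕ, i < len → w' (q + (i : Fin (m+1))) = w (q + ((i+1 : ℕ) : Fin (m+1)))) ∧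
      w' (q + (len : Fin (m+1))) = w q ∧
      (∀ x, (∀ i : ℕ, i ≤ len → x ≠ q + (i : Fin (m+1))) → w' x = w x) := by
  induction len with
  | zero =>
    intro w q _ _
    refine ⟨w, R_refl w, fun i hi => absurd hi (Nat.not_lt_zero i), ?_, fun x _ => rfl⟩
    · norm_num
  | succ len ih =>
    intro w q hlen h
    have h1 : w q < w (q + 1) := by
      have := h 1 one_pos (by omega)
      simpa using this
    set w1 : Equiv.Perm (Fin (m+1)) := w * Equiv.swap q (q+1) with hw1
    have hstep : R m w w1 := R_swap w q h1
    have hw1q : w1 (q+1) = w q := by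
      simp [hw1, Equiv.Perm.mul_apply, Equiv.swap_apply_right]
    have hw1o : ∀ x, x ≠ q → x ≠ q + 1 → w1 x = w x := by
      intro x hx1 hx2
      simp [hw1, Equiv.Perm.mul_apply, Equiv.swap_apply_of_ne_of_ne hx1 hx2]
    -- positions q+1+j for 1 ≤ j ≤ len are distinct from q, q+1
    have hdist : ∀ j : ℕ, 0 < j → j ≤ len → (q + 1 + (j : Fin (m+1)) ≠ q)
        ∧ (q + 1 + (j : Fin (m+1)) ≠ q + 1) := by
      intro j hj1 hj2
      constructor
      · intro hcon
        have : q + ((1 + j : ℕ) : Fin (m+1)) = q + ((0 : ℕ) : Fin (m+1)) := by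
          push_cast; rw [← add_assoc]; simpa using hcon
        have := add_cast_inj q (by omega) (by omega) this
        omega
      · intro hcon
        have : q + ((1 + j : ℕ) : Fin (m+1)) = q + ((1 : ℕ) : Fin (m+1)) := by
          push_cast; rw [← add_assoc]; simpa using hcon
        have := add_cast_inj q (by omega) (by omega) this
        omega
    have ihcond : ∀ j : ℕ, 0 < j → j ≤ len → w1 (q+1) < w1 (q + 1 + (j : Fin (m+1))) := by
      intro j hj1 hj2
      rw [hw1q, hw1o _ (hdist j hj1 hj2).1 (hdist j hj1 hj2).2]
      have : q + 1 + (j : Fin (m+1)) = q + ((j + 1 : ℕ) : Fin (m+1)) := by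
        push_cast; ring
      rw [this]
      exact h (j+1) (by omega) (by omega)
    obtain ⟨w', hR', hmid, htop, hout⟩ := ih w1 (q+1) (by omega) ihcond
    refine ⟨w', R_trans hstep hR', ?_, ?_, ?_⟩
    · intro i hi
      rcases Nat.eq_zero_or_pos i with rfl | hip
      · -- w' q = w1 q = w (q+1)
        have hq : w' q = w1 q := by
          apply hout
          intro i hi hcon
          have : q + ((0:ℕ) : Fin (m+1)) = q + ((1 + i : ℕ) : Fin (m+1)) := by
            push_cast; rw [← add_assoc]; simpa using hcon
          have := add_cast_inj q (by omega) (by omega) this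
          omega
        have : w1 q = w (q + 1) := by
          simp [hw1, Equiv.Perm.mul_apply, Equiv.swap_apply_left]
        simpa using hq.trans this
      · have e1 : q + (i : Fin (m+1)) = q + 1 + ((i - 1 : ℕ) : Fin (m+1)) := by
          rw [cast_sub hip]; push_cast; ring
        rw [e1, hmid (i-1) (by omega)]
        have e2 : q + 1 + ((i - 1 + 1 : ℕ) : Fin (m+1)) = q + ((i+1 : ℕ) : Fin (m+1)) := by
          have : i - 1 + 1 = i := by omega
          rw [this]; push_cast; ring
        rw [e2]
        apply hw1o
        · intro hcon
          have : q + ((i+1 : ℕ) : Fin (m+1)) = q + ((0:ℕ) : Fin (m+1)) := by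
            push_cast; simpa using hcon
          have := add_cast_inj q (by omega) (by omega) this
          omega
        · intro hcon
          have : q + ((i+1 : ℕ) : Fin (m+1)) = q + ((1:ℕ) : Fin (m+1)) := by
            push_cast; simpa using hcon
          have := add_cast_inj q (by omega) (by omega) this
          omega
    · have e1 : q + ((len + 1 : ℕ) : Fin (m+1)) = q + 1 + ((len : ℕ) : Fin (m+1)) := by
        push_cast; ring
      rw [e1, htop, hw1q]
    · intro x hx
      have hx' : ∀ i : ℕ, i ≤ len → x ≠ q + 1 + (i : Fin (m+1)) := by
        intro i hi hcon
        apply hx (1 + i) (by omega)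
        rw [hcon]; push_cast; ring
      rw [hout x hx']
      apply hw1o
      · have := hx 0 (by omega); simpa using this
      · have := hx 1 (by omega); simpa using this

/-- A large entry at position `q + len` can bubble cyclically leftward to `q`,
past `len` smaller entries. -/
private lemma pass2 (len : ℕ) : ∀ (w : Equiv.Perm (Fin (m+1))) (q : Fin (m+1)),
    len < m + 1 →
    (∀ j : ℕ, j < len → w (q + (j : Fin (m+1))) < w (q + (len : Fin (m+1)))) →
    ∃ w', R m w w' ∧
      w' q = w (q + (len : Fin (m+1))) ∧
      (∀ i : ℕ, 0 < i → i ≤ len → w' (q + (i : Fin (m+1))) = w (q + ((i-1 : ℕ) : Fin (m+1)))) ∧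
      (∀ x, (∀ i : ℕ, i ≤ len → x ≠ q + (i : Fin (m+1))) → w' x = w x) := by
  induction len with
  | zero =>
    intro w q _ _
    exact ⟨w, R_refl w, by norm_num, fun i h1 h2 => by omega, fun x _ => rfl⟩
  | succ len ih =>
    intro w q hlen h
    set a : Fin (m+1) := q + (len : Fin (m+1)) with ha
    have ha1 : a + 1 = q + ((len + 1 : ℕ) : Fin (m+1)) := by
      rw [ha]; push_cast; ring
    have hasc : w a < w (a + 1) := by
      rw [ha1, ha]
      exact h len (by omega)
    set w1 : Equiv.Perm (Fin (m+1)) := w * Equiv.swap a (a+1) with hw1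
    have hstep : R m w w1 := R_swap w a hasc
    have hw1a : w1 a = w (a+1) := by
      simp [hw1, Equiv.Perm.mul_apply, Equiv.swap_apply_left]
    have hw1a1 : w1 (a+1) = w a := by
      simp [hw1, Equiv.Perm.mul_apply, Equiv.swap_apply_right]
    have hw1o : ∀ x, x ≠ a → x ≠ a + 1 → w1 x = w x := by
      intro x hx1 hx2
      simp [hw1, Equiv.Perm.mul_apply, Equiv.swap_apply_of_ne_of_ne hx1 hx2]
    have hqj_ne : ∀ j : ℕ, j < len → (q + (j : Fin (m+1)) ≠ a ∧ q + (j : Fin (m+1)) ≠ a + 1) := by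
      intro j hj
      constructor
      · intro hcon
        exact absurd (add_cast_inj q (by omega) (by omega) (hcon.trans ha)) (by omega)
      · intro hcon
        rw [ha1] at hcon
        exact absurd (add_cast_inj q (by omega) (by omega) hcon) (by omega)
    have ihcond : ∀ j : ℕ, j < len → w1 (q + (j : Fin (m+1))) < w1 (q + (len : Fin (m+1))) := by
      intro j hj
      rw [← ha, hw1a, hw1o _ (hqj_ne j hj).1 (hqj_ne j hj).2]
      have := h j (by omega)
      rwa [← ha1] at this
    obtain ⟨w', hR', hq0, hmid, hout⟩ := ih w1 q (by omega) ihcond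
    refine ⟨w', R_trans hstep hR', ?_, ?_, ?_⟩
    · rw [hq0, ← ha, hw1a, ha1]
    · intro i hi1 hi2
      rcases Nat.lt_or_ge i (len + 1) with hilt | hige
      · have hi' : i ≤ len := by omega
        rw [hmid i hi1 hi']
        apply hw1o
        · intro hcon
          exact absurd (add_cast_inj q (by omega) (by omega) (hcon.trans ha)) (by omega)
        · intro hcon
          rw [ha1] at hcon
          exact absurd (add_cast_inj q (by omega) (by omega) hcon) (by omega)
      · have hieq : i = len + 1 := by omega
        subst hieq
        have e1 : q + ((len + 1 : ℕ) : Fin (m+1)) = a + 1 := ha1.symm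
        have hne : ∀ i : ℕ, i ≤ len → a + 1 ≠ q + (i : Fin (m+1)) := by
          intro i hi hcon
          rw [ha1] at hcon
          exact absurd (add_cast_inj q (by omega) (by omega) hcon) (by omega)
        rw [e1, hout (a+1) hne, hw1a1, ha]
        norm_num
    · intro x hx
      rw [hout x (fun i hi => hx i (by omega))]
      apply hw1o
      · have := hx len (by omega); rwa [← ha] at this
      · have := hx (len+1) (by omega); rwa [← ha1] at this

/-! ### Rotations reach the identity -/

private lemma addRight_zero_eq : (Equiv.addRight (0 : Fin (m+1))) = 1 := by
  apply Equiv.ext; intro x; simp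

private lemma rot_step (c : Fin (m+1)) (hc : c ≠ 0) :
    R m (Equiv.addRight c) (Equiv.addRight (c + 1)) := by
  set w : Equiv.Perm (Fin (m+1)) := Equiv.addRight c with hw
  have happ : ∀ x, w x = x + c := fun x => rfl
  have hcond : ∀ j : ℕ, 0 < j → j ≤ m → w (-c) < w (-c + (j : Fin (m+1))) := by
    intro j hj1 hj2
    rw [happ, happ]
    have e1 : -c + c = 0 := by ring
    have e2 : -c + (j : Fin (m+1)) + c = (j : Fin (m+1)) := by ring
    rw [e1, e2, Fin.lt_def]
    have : ((j : Fin (m+1)) : ℕ) = j := val_cast (by omega)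
    simp [this]
    omega
  obtain ⟨w', hR, hmid, htop, hout⟩ := pass m w (-c) (by omega) hcond
  have hw' : w' = Equiv.addRight (c + 1) := by
    apply Equiv.ext; intro x
    have hx : x = -c + (((x + c).val : ℕ) : Fin (m+1)) := by
      rw [Fin.cast_val_eq_self]; ring
    have hlt : (x + c).val < m + 1 := (x + c).isLt
    rcases Nat.lt_or_ge (x + c).val m with hcase | hcase
    · rw [hx, hmid _ hcase]
      rw [happ]
      show -c + (((x+c).val + 1 : ℕ) : Fin (m+1)) + c = _
      rw [Equiv.coe_addRight]
      push_cast
      ring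
    · have heq : (x + c).val = m := by omega
      have hxm : x = -c + ((m : ℕ) : Fin (m+1)) := by rw [hx, heq]
      rw [hxm, htop, happ, Equiv.coe_addRight]
      have e0 : -c + c = 0 := by ring
      rw [e0]
      show (0 : Fin (m+1)) = -c + ((m : ℕ) : Fin (m+1)) + (c + 1)
      have hm1 : ((m : ℕ) : Fin (m+1)) + 1 = 0 := by
        have h := Fin.natCast_self (m+1)
        push_cast at h
        linear_combination h
      linear_combination -hm1
  rw [← hw']
  exact hR

private lemma rot_to_one : ∀ (k : ℕ) (c : Fin (m+1)), m + 1 ≤ c.val + k →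
    R m (Equiv.addRight c) 1 := by
  intro k
  induction k with
  | zero => intro c hk; exact absurd hk (by have := c.isLt; omega)
  | succ k ih =>
    intro c hk
    by_cases hc : c = 0
    · rw [hc, addRight_zero_eq]; exact R_refl 1
    · have hstep := rot_step c hc
      by_cases hc1 : c + 1 = 0
      · rw [hc1, addRight_zero_eq] at hstep; exact hstep
      · have hne : c ≠ Fin.last m := by
          intro h
          rw [h, Fin.last_add_one] at hc1
          exact hc1 rfl
        have hval : (c + 1).val = c.val + 1 := by
          rw [Fin.val_add_one, if_neg hne]
        exact R_trans hstep (ih (c+1) (by omega))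

/-! ### Every permutation reaches the identity -/

/-- `Pp m w ℓ`: the cyclic run of length `ℓ` of decreasing values
`last, last - 1, …` sits (cyclically leftwards) at the position of `last`. -/
private def Pp (m : ℕ) (w : Equiv.Perm (Fin (m+1))) (ℓ : ℕ) : Prop :=
  ∀ i : ℕ, i < ℓ →
    w (w.symm (Fin.last m) - (i : Fin (m+1))) = Fin.last m - (i : Fin (m+1))

private lemma rot_done (w : Equiv.Perm (Fin (m+1))) (hP : Pp m w (m+1)) : R m w 1 := by
  have hw : w = Equiv.addRight (Fin.last m - w.symm (Fin.last m)) := by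
    apply Equiv.ext; intro j
    set p := w.symm (Fin.last m) with hp
    have h2 := hP (p - j).val (p - j).isLt
    rw [Fin.cast_val_eq_self] at h2
    have h3 : p - (p - j) = j := by ring
    rw [h3] at h2
    rw [h2, Equiv.coe_addRight]
    ring
  rw [hw]
  exact rot_to_one (m+1) _ (by omega)

private lemma not_run_small {ℓ : ℕ} (hℓ : ℓ ≤ m) (v : Fin (m+1))
    (hv : ∀ i : ℕ, i ≤ ℓ → v ≠ Fin.last m - (i : Fin (m+1))) : v.val + ℓ < m := by
  by_contra hcon
  push_neg at hcon
  have hvm : v.val ≤ m := by have := v.isLt; omega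
  apply hv (m - v.val) (by omega)
  apply Fin.ext
  rw [last_sub_val (by omega)]
  omega

private lemma improve : ∀ (d : ℕ) (w : Equiv.Perm (Fin (m+1))) (ℓ : ℕ), ℓ < m + 1 →
    Pp m w ℓ →
    ((w.symm (Fin.last m) - (ℓ : Fin (m+1))) - w.symm (Fin.last m - (ℓ : Fin (m+1)))).val ≤ d →
    ∃ w', R m w w' ∧ Pp m w' (ℓ+1) := by
  intro d
  induction d with
  | zero =>
    intro w ℓ hℓ hP hdist
    have h0 : (w.symm (Fin.last m) - (ℓ : Fin (m+1))) = w.symm (Fin.last m - (ℓ : Fin (m+1))) := by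
      have : ((w.symm (Fin.last m) - (ℓ : Fin (m+1))) - w.symm (Fin.last m - (ℓ : Fin (m+1)))) = 0 :=
        Fin.ext (by rw [Fin.val_zero]; omega)
      exact sub_eq_zero.mp this
    refine ⟨w, R_refl w, ?_⟩
    intro i hi
    rcases Nat.lt_or_ge i ℓ with hilt | hige
    · exact hP i hilt
    · have : i = ℓ := by omega
      subst this
      rw [h0, Equiv.apply_symm_apply]
  | succ d ih =>
    intro w ℓ hℓ hP hdist
    by_cases hx : w (w.symm (Fin.last m) - (ℓ : Fin (m+1))) = Fin.last m - (ℓ : Fin (m+1))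
    · refine ⟨w, R_refl w, ?_⟩
      intro i hi
      rcases Nat.lt_or_ge i ℓ with hilt | hige
      · exact hP i hilt
      · have : i = ℓ := by omega
        subst this
        exact hx
    · -- the shift case; first ℓ = 0 is impossible
      rcases ℓ with _ | ℓ'
      · exfalso
        apply hx
        simp
      · set p := w.symm (Fin.last m) with hp
        set q : Fin (m+1) := p - ((ℓ'+1 : ℕ) : Fin (m+1)) with hq
        set s := w q with hs
        -- positions p - i are distinct
        have posdist : ∀ i j : ℕ, i < m+1 → j < m+1 →
            p - (i : Fin (m+1)) = p - (j : Fin (m+1)) → i = j := by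
          intro i j hi hj hcon
          exact cast_injF hi hj (sub_right_inj.mp hcon)
        -- q + j = p - (ℓ - j) for j ≤ ℓ
        have hqj : ∀ j : ℕ, j ≤ ℓ'+1 →
            q + (j : Fin (m+1)) = p - (((ℓ'+1) - j : ℕ) : Fin (m+1)) := by
          intro j hj
          rw [cast_sub hj, hq]
          ring
        have hs_notrun : ∀ i : ℕ, i ≤ ℓ'+1 → s ≠ Fin.last m - (i : Fin (m+1)) := by
          intro i hi hcon
          rcases Nat.lt_or_ge i (ℓ'+1) with hilt | hige
          · have := hP i hilt
            rw [← hcon] at this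
            have hpq : q = p - (i : Fin (m+1)) := w.injective (hs ▸ this).symm
            rw [hq] at hpq
            exact absurd (posdist _ _ (by omega) (by omega) hpq) (by omega)
          · have : i = ℓ'+1 := by omega
            subst this
            exact hx (hs ▸ hcon)
        have hsmall : s.val + (ℓ'+1) < m := not_run_small (by omega) s hs_notrun
        -- pass conditions
        have hcond : ∀ j : ℕ, 0 < j → j ≤ ℓ'+1 → w q < w (q + (j : Fin (m+1))) := by
          intro j hj1 hj2
          rw [hqj j hj2, hP ((ℓ'+1) - j) (by omega), Fin.lt_def,
            last_sub_val (by omega)]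
          omega
        obtain ⟨w', hR, hmid, htop, hout⟩ := pass (ℓ'+1) w q (by omega) hcond
        -- new position of the max
        have htopval : w' (q + (ℓ' : Fin (m+1))) = Fin.last m := by
          rw [hmid ℓ' (by omega)]
          have : q + ((ℓ'+1 : ℕ) : Fin (m+1)) = p := by rw [hq]; ring
          rw [this, hp, Equiv.apply_symm_apply]
        have hp0' : w'.symm (Fin.last m) = q + (ℓ' : Fin (m+1)) := by
          rw [Equiv.symm_apply_eq, htopval]
        -- Pp w' (ℓ'+1) still holds
        have hP' : Pp m w' (ℓ'+1) := by
          intro i hi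
          rw [hp0']
          have e1 : q + (ℓ' : Fin (m+1)) - (i : Fin (m+1)) = q + ((ℓ' - i : ℕ) : Fin (m+1)) := by
            rw [cast_sub (by omega)]; ring
          rw [e1, hmid (ℓ' - i) (by omega)]
          have e2 : ℓ' - i + 1 = (ℓ'+1) - i := by omega
          rw [e2, hqj _ (by omega)]
          have e3 : (ℓ'+1) - ((ℓ'+1) - i) = i := by omega
          rw [e3]
          exact hP i (by omega)
        -- the target value's position is unchanged
        set pc := w.symm (Fin.last m - ((ℓ'+1 : ℕ) : Fin (m+1))) with hpc
        have hpcne : ∀ i : ℕ, i ≤ ℓ'+1 → pc ≠ q + (i : Fin (m+1)) := by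
          intro i hi hcon
          have hwpc : w pc = Fin.last m - ((ℓ'+1 : ℕ) : Fin (m+1)) := by
            rw [hpc, Equiv.apply_symm_apply]
          rcases Nat.eq_zero_or_pos i with rfl | hip
          · rw [show ((0:ℕ) : Fin (m+1)) = 0 by norm_num, add_zero] at hcon
            rw [hcon, ← hs] at hwpc
            exact hs_notrun (ℓ'+1) (le_refl _) hwpc
          · rw [hcon, hqj i hi, hP ((ℓ'+1) - i) (by omega)] at hwpc
            have := cast_injF (i := (ℓ'+1) - i) (j := ℓ'+1) (by omega) (by omega)
              (sub_right_inj.mp hwpc)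
            omega
        have hwpc' : w' pc = Fin.last m - ((ℓ'+1 : ℕ) : Fin (m+1)) := by
          rw [hout pc hpcne, hpc, Equiv.apply_symm_apply]
        have hpc' : w'.symm (Fin.last m - ((ℓ'+1 : ℕ) : Fin (m+1))) = pc := by
          rw [Equiv.symm_apply_eq, hwpc']
        -- distance decreased
        have hqpc : q - pc ≠ 0 := by
          intro hcon
          have : q = pc := by linear_combination hcon
          apply hs_notrun (ℓ'+1) (le_refl _)
          rw [hs, this, hpc, Equiv.apply_symm_apply]
        have hdist' : ((w'.symm (Fin.last m) - ((ℓ'+1 : ℕ) : Fin (m+1))) -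
            w'.symm (Fin.last m - ((ℓ'+1 : ℕ) : Fin (m+1)))).val ≤ d := by
          rw [hp0', hpc']
          have e4 : q + (ℓ' : Fin (m+1)) - ((ℓ'+1 : ℕ) : Fin (m+1)) - pc = (q - pc) - 1 := by
            push_cast; ring
          rw [e4, val_sub_one hqpc]
          have hvpos : 0 < (q - pc).val := by
            rcases Nat.eq_zero_or_pos (q - pc).val with h0 | h0
            · exact absurd (Fin.ext h0) hqpc
            · exact h0
          have : (q - pc).val ≤ d + 1 := by
            rw [hq, hpc] at *
            exact hdist
          omega
        obtain ⟨w'', hR2, hP2⟩ := ih w' (ℓ'+1) hℓ hP' hdist'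
        exact ⟨w'', R_trans hR hR2, hP2⟩

private lemma all_to_one (w : Equiv.Perm (Fin (m+1))) : R m w 1 := by
  suffices h : ∀ (k ℓ : ℕ) (w : Equiv.Perm (Fin (m+1))), m + 1 ≤ ℓ + k → Pp m w ℓ → R m w 1 by
    exact h (m+1) 0 w (by omega) (fun i hi => absurd hi (by omega))
  intro k
  induction k with
  | zero =>
    intro ℓ w hk hP
    exact rot_done w (fun i hi => hP i (by omega))
  | succ k ih =>
    intro ℓ w hk hP
    by_cases hcase : m + 1 ≤ ℓ
    · exact rot_done w (fun i hi => hP i (by omega))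
    · obtain ⟨w', hR, hP'⟩ := improve _ w ℓ (by omega) hP (le_refl _)
      exact R_trans hR (ih (ℓ+1) w' (by omega) hP')

/-! ### From the identity to the reversal -/

private lemma one_to_rev : R m 1 (Fin.revPerm : Equiv.Perm (Fin (m+1))) := by
  suffices h : ∀ k : ℕ, k ≤ m → ∃ w : Equiv.Perm (Fin (m+1)), R m 1 w ∧
      ∀ j : Fin (m+1), w j = if (j : ℕ) ≤ k then ((k - (j : ℕ) : ℕ) : Fin (m+1)) else j by
    obtain ⟨w, hR, hw⟩ := h m (le_refl m)
    have : w = Fin.revPerm := by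
      apply Equiv.ext; intro j
      rw [hw j, if_pos (by have := j.isLt; omega)]
      apply Fin.ext
      rw [val_cast (by omega), Fin.revPerm_apply, Fin.val_rev]
      omega
    rwa [this] at hR
  intro k
  induction k with
  | zero =>
    intro _
    refine ⟨1, R_refl 1, fun j => ?_⟩
    by_cases hj : (j : ℕ) ≤ 0
    · rw [if_pos hj]
      have hj0 : j = 0 := Fin.ext (by rw [Fin.val_zero]; omega)
      rw [hj0]
      norm_num
    · rw [if_neg hj]
      rfl
  | succ k ih =>
    intro hk
    obtain ⟨w, hR, hw⟩ := ih (by omega)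
    have hcond : ∀ j : ℕ, j < k+1 →
        w ((0 : Fin (m+1)) + (j : Fin (m+1))) < w ((0 : Fin (m+1)) + ((k+1 : ℕ) : Fin (m+1))) := by
      intro j hj
      rw [zero_add, zero_add, hw, hw, val_cast (show j < m+1 by omega),
        val_cast (show k+1 < m+1 by omega)]
      rw [if_pos (by omega), if_neg (by omega)]
      rw [Fin.lt_def, val_cast (show k - j < m+1 by omega),
        val_cast (show k+1 < m+1 by omega)]
      omega
    obtain ⟨w2, hR2, h0, hmid, hout⟩ := pass2 (k+1) w 0 (by omega) hcond
    refine ⟨w2, R_trans hR hR2, fun j => ?_⟩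
    have hj_eq : (0 : Fin (m+1)) + (((j : ℕ) : ℕ) : Fin (m+1)) = j := by
      rw [zero_add, Fin.cast_val_eq_self]
    rcases Nat.lt_or_ge (k+1) (j : ℕ) with hcase | hcase
    · rw [if_neg (by omega)]
      have : ∀ i : ℕ, i ≤ k+1 → j ≠ (0 : Fin (m+1)) + (i : Fin (m+1)) := by
        intro i hi hcon
        rw [← hj_eq] at hcon
        have := add_cast_inj (0 : Fin (m+1)) (j.isLt) (by omega) hcon
        omega
      rw [hout j this, hw, if_neg (by omega)]
    · rw [if_pos hcase]
      rcases Nat.eq_zero_or_pos (j : ℕ) with hj0 | hjpos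
      · have hj00 : j = 0 := Fin.ext hj0
        subst hj00
        rw [h0, zero_add, hw, val_cast (show k+1 < m+1 by omega), if_neg (by omega)]
        simp
      · rw [← hj_eq, hmid (j : ℕ) hjpos hcase, hw,
          if_pos (by rw [zero_add, val_cast (show (j:ℕ) - 1 < m + 1 by have := j.isLt; omega)]; omega)]
        congr 1
        rw [zero_add, val_cast (show (j:ℕ) - 1 < m + 1 by have := j.isLt; omega)]
        omega

/-! ### Reversal symmetry -/

private lemma step_rev {x y : Equiv.Perm (Fin (m+1))} (h : Step m x y) :
    R m (Fin.revPerm * y) (Fin.revPerm * x) := by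
  obtain ⟨i, rfl⟩ := h
  by_cases hc : x i < x (i+1)
  · have hb : bubble (m+1) i x = x * Equiv.swap i (i+1) := by
      simp only [bubble]; rw [if_pos hc]
    rw [hb]
    set z := Fin.revPerm * (x * Equiv.swap i (i+1)) with hz
    have hzi : z i = (x (i+1)).rev := by
      simp [hz, Equiv.Perm.mul_apply, Equiv.swap_apply_left]
    have hzi1 : z (i+1) = (x i).rev := by
      simp [hz, Equiv.Perm.mul_apply, Equiv.swap_apply_right]
    have hlt : z i < z (i+1) := by
      rw [hzi, hzi1]
      exact Fin.rev_lt_rev.mpr hc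
    have hbz : bubble (m+1) i z = Fin.revPerm * x := by
      simp only [bubble]
      rw [if_pos hlt, hz, mul_assoc, mul_assoc, Equiv.swap_mul_self, mul_one]
    exact Relation.ReflTransGen.single ⟨i, hbz⟩
  · have hb : bubble (m+1) i x = x := by
      simp only [bubble]; rw [if_neg hc]
    rw [hb]
    exact R_refl _

private lemma R_rev {x y : Equiv.Perm (Fin (m+1))} (h : R m x y) :
    R m (Fin.revPerm * y) (Fin.revPerm * x) := by
  induction h with
  | refl => exact R_refl _
  | tail hab hbc ih => exact R_trans (step_rev hbc) ih

/-! ### STATEMENT 15 -/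

/-- the operators `f_0, f_1, …, f_{n−1}` act transitively on `S_n`:
for all `u v` there is an element `g` of the submonoid of self-maps of `S_n`
generated by them with `g u = v`. -/
theorem bubble_transitive (n : ℕ) [NeZero n] (hn : 2 ≤ n) (u v : Equiv.Perm (Fin n)) :
    ∃ g ∈ Submonoid.closure (Set.range (bubble n)), g u = v := by
  obtain ⟨m, rfl⟩ : ∃ m, n = m + 1 := ⟨n - 1, by omega⟩
  have h1 : R m u 1 := all_to_one u
  have h2 : R m 1 Fin.revPerm := one_to_rev
  have h3 : R m Fin.revPerm v := by
    have h4 : R m (Fin.revPerm * v) 1 := all_to_one _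
    have h5 := R_rev h4
    have hrr : (Fin.revPerm : Equiv.Perm (Fin (m+1))) * Fin.revPerm = 1 := by
      apply Equiv.ext; intro a
      simp [Equiv.Perm.mul_apply, Fin.rev_rev]
    rw [mul_one, ← mul_assoc, hrr, one_mul] at h5
    exact h5
  exact R_closure (R_trans (R_trans h1 h2) h3)


end AffineSorting
end
end
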